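/- arXiv:2207.03254 — 6 statements merged into one kernel-verified Lean document; each statement's English description precedes it below -/
import Mathlib

section
/- Let Θ(q) = Σ_{i,j ∈ I} q^{φ(i,j)} E_{ii} ⊗ E_{jj} + (q - q^{-1}) Σ_{i<j} (-1)^{p(i)} (E_{ji} + E_{-j,-i}) ⊗ E_{ij} be an element of End(V)⊗End(V) over ℚ(q), where φ(i,j) = δ_{|i|,|j|} sgn(j). Then Θ(q) · Θ(q^{-1}) = 1 ⊗ 1; that is, Θ(q) is invertible and its inverse is obtained by replacing q with q^{-1}. -/
set_option maxHeartbeats 1600000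
set_option maxRecDepth 4000
set_option synthInstance.maxHeartbeats 1000000


/-- The index set `I = {1,…,n,-1,…,-n}`: `Sum.inl a ↔ a+1`, `Sum.inr a ↔ -(a+1)`. -/
abbrev Idx (n : ℕ) := Fin n ⊕ Fin n

/-- Parity: `0` on positive indices, `1` on negative ones. -/
def pa {n : ℕ} : Idx n → ℕ
  | .inl _ => 0
  | .inr _ => 1

/-- The integer represented by an index. -/
def idxZ {n : ℕ} : Idx n → ℤ
  | .inl a => (a : ℤ) + 1
  | .inr a => -((a : ℤ) + 1)

/-- Negation of an index. -/
def ng {n : ℕ} : Idx n → Idx n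
  | .inl a => .inr a
  | .inr a => .inl a

/-- Absolute value of an index. -/
def absIdx {n : ℕ} : Idx n → Fin n
  | .inl a => a
  | .inr a => a

/-- `φ(i,j) = δ_{|i|,|j|} sgn(j)`. -/
def phiIdx {n : ℕ} (i j : Idx n) : ℤ :=
  if absIdx i = absIdx j then (if pa j = 1 then -1 else 1) else 0

/-- The coefficient of `E_{ab} ⊗ E_{cd}` in
`Θ(x) = Σ_{i,j} x^{φ(i,j)} E_{ii}⊗E_{jj} + (x - x⁻¹) Σ_{i<j} (-1)^{p(i)}(E_{ji}+E_{-j,-i})⊗E_{ij}`. -/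
noncomputable def thetaCoeff {n : ℕ} (x : RatFunc ℚ) (a b c d : Idx n) : RatFunc ℚ :=
  (if a = b ∧ c = d then x ^ phiIdx a c else 0)
  + (if idxZ c < idxZ d ∧ a = d ∧ b = c then (x - x⁻¹) * (-1) ^ pa c else 0)
  + (if idxZ c < idxZ d ∧ a = ng d ∧ b = ng c then (x - x⁻¹) * (-1) ^ pa c else 0)

/-- The matrix of `Θ(x) ∈ End(V) ⊗ End(V)` acting on `V ⊗ V`, where the superalgebra
`End(V) ⊗ End(V)` is represented faithfully on `V ⊗ V` via the Koszul sign rule: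
`(E_{ab} ⊗ E_{cd})(v_b ⊗ v_d) = (-1)^{(p(c)+p(d))·p(b)} v_a ⊗ v_c`.  Under this
representation the super tensor-product multiplication
`(a'⊗b)(a⊗b') = (-1)^{p̄(a)p̄(b)} a'a ⊗ bb'` becomes matrix multiplication. -/
noncomputable def thetaMat (n : ℕ) (x : RatFunc ℚ) :
    Matrix (Idx n × Idx n) (Idx n × Idx n) (RatFunc ℚ) :=
  Matrix.of fun rc cc =>
    (-1 : RatFunc ℚ) ^ ((pa rc.2 + pa cc.2) * pa cc.1) *
      thetaCoeff x rc.1 cc.1 rc.2 cc.2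

variable {n : ℕ}

lemma phi1 (a b : Idx n) (h : idxZ b < idxZ a) : phiIdx a b = - phiIdx b a := by
  rcases a with a|a <;> rcases b with b|b <;>
    simp only [phiIdx, absIdx, pa, idxZ] at h ⊢ <;>
    norm_num <;> split_ifs <;>
    simp only [Fin.ext_iff] at * <;> omega

lemma phi2 (a b : Idx n) (h : idxZ b < idxZ (ng a)) :
    phiIdx a b = - phiIdx (ng b) (ng a) := by
  rcases a with a|a <;> rcases b with b|b <;>
    simp only [phiIdx, absIdx, pa, ng, idxZ] at h ⊢ <;>
    norm_num <;> split_ifs <;>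
    simp only [Fin.ext_iff] at * <;> omega

noncomputable def Dm (n : ℕ) (x : RatFunc ℚ) :
    Matrix (Idx n × Idx n) (Idx n × Idx n) (RatFunc ℚ) :=
  Matrix.diagonal fun rc => x ^ phiIdx rc.1 rc.2

lemma Dmul (x : RatFunc ℚ) (hx : x ≠ 0) : Dm n x * Dm n x⁻¹ = 1 := by
  rw [Dm, Dm, Matrix.diagonal_mul_diagonal]
  have : (fun rc : Idx n × Idx n => x ^ phiIdx rc.1 rc.2 * x⁻¹ ^ phiIdx rc.1 rc.2)
      = fun _ => 1 := by
    funext rc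
    rw [inv_zpow, mul_inv_cancel₀ (zpow_ne_zero _ hx)]
  rw [this, Matrix.diagonal_one]


noncomputable def sg1 {n : ℕ} (rc : Idx n × Idx n) : RatFunc ℚ :=
  (-1) ^ ((pa rc.2 + pa rc.1) * pa rc.2 + pa rc.2)

noncomputable def sg2 {n : ℕ} (rc : Idx n × Idx n) : RatFunc ℚ :=
  (-1) ^ ((pa rc.2 + pa (ng rc.1)) * pa (ng rc.2) + pa rc.2)

noncomputable def Bm (n : ℕ) :
    Matrix (Idx n × Idx n) (Idx n × Idx n) (RatFunc ℚ) :=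
  Matrix.of fun rc cc =>
    (if cc = (rc.2, rc.1) ∧ idxZ rc.2 < idxZ rc.1 then sg1 rc else 0)
    + (if cc = (ng rc.2, ng rc.1) ∧ idxZ rc.2 < idxZ (ng rc.1) then sg2 rc else 0)

lemma split (x : RatFunc ℚ) :
    thetaMat n x = Dm n x + (x - x⁻¹) • Bm n := by
  ext ⟨a, b⟩ ⟨e, f⟩
  simp only [thetaMat, thetaCoeff, Dm, Bm, Matrix.of_apply, Matrix.add_apply,
    Matrix.smul_apply, Matrix.diagonal_apply, smul_eq_mul, mul_add]
  have h1 : (-1 : RatFunc ℚ) ^ ((pa b + pa f) * pa e) *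
      (if a = e ∧ b = f then x ^ phiIdx a b else 0)
      = (if (a, b) = (e, f) then x ^ phiIdx a b else 0) := by
    by_cases h : a = e ∧ b = f
    · obtain ⟨rfl, rfl⟩ := h
      simp [show (pa b + pa b) * pa a = 2 * (pa b * pa a) by ring, pow_mul]
    · rw [if_neg h, if_neg (by simpa [Prod.ext_iff] using h), mul_zero]
  have h2 : (-1 : RatFunc ℚ) ^ ((pa b + pa f) * pa e) *
      (if idxZ b < idxZ f ∧ a = f ∧ e = b then (x - x⁻¹) * (-1) ^ pa b else 0)
      = (x - x⁻¹) * (if (e, f) = (b, a) ∧ idxZ b < idxZ a then sg1 ((a, b) : Idx n × Idx n) else 0) := by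
    by_cases h : idxZ b < idxZ f ∧ a = f ∧ e = b
    · obtain ⟨hlt, rfl, rfl⟩ := h
      simp only [sg1, pow_add, Prod.mk.injEq, and_self, if_pos, hlt, if_true, true_and]
      ring
    · rw [if_neg h, if_neg (by simp only [Prod.ext_iff]; rintro ⟨⟨rfl, rfl⟩, hlt⟩; exact h ⟨hlt, rfl, rfl⟩),
        mul_zero, mul_zero]
  have h3 : (-1 : RatFunc ℚ) ^ ((pa b + pa f) * pa e) *
      (if idxZ b < idxZ f ∧ a = ng f ∧ e = ng b then (x - x⁻¹) * (-1) ^ pa b else 0)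
      = (x - x⁻¹) * (if (e, f) = (ng b, ng a) ∧ idxZ b < idxZ (ng a) then sg2 ((a, b) : Idx n × Idx n) else 0) := by
    have hng : ∀ i : Idx n, ng (ng i) = i := by rintro (i | i) <;> rfl
    by_cases h : idxZ b < idxZ f ∧ a = ng f ∧ e = ng b
    · obtain ⟨hlt, ha, rfl⟩ := h
      have hf : f = ng a := by rw [ha, hng]
      subst hf
      simp only [sg2, pow_add, Prod.mk.injEq, and_self, if_pos, hlt, if_true, true_and, hng, eq_self_iff_true]
      ring
    · rw [if_neg h, if_neg ?_, mul_zero, mul_zero]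
      simp only [Prod.ext_iff]
      rintro ⟨⟨rfl, rfl⟩, hlt⟩
      exact h ⟨hlt, (hng a).symm, rfl⟩
  rw [h1, h2, h3]
  ring

lemma ng_ng (i : Idx n) : ng (ng i) = i := by rcases i <;> rfl

lemma commL (x : RatFunc ℚ) : Dm n x * Bm n = Bm n * Dm n x⁻¹ := by
  ext ⟨a, b⟩ ⟨c, d⟩
  simp only [Dm]
  rw [Matrix.diagonal_mul, Matrix.mul_diagonal]
  simp only [Bm, Matrix.of_apply]
  rw [mul_add, add_mul]
  congr 1
  · by_cases h : ((c, d) : Idx n × Idx n) = (b, a) ∧ idxZ b < idxZ a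
    · obtain ⟨h1, hlt⟩ := h
      rw [Prod.mk.injEq] at h1
      obtain ⟨rfl, rfl⟩ := h1
      rw [if_pos ⟨rfl, hlt⟩, phi1 _ _ hlt, zpow_neg, inv_zpow]
      ring
    · rw [if_neg h, mul_zero, zero_mul]
  · by_cases h : ((c, d) : Idx n × Idx n) = (ng b, ng a) ∧ idxZ b < idxZ (ng a)
    · obtain ⟨h1, hlt⟩ := h
      rw [Prod.mk.injEq] at h1
      obtain ⟨rfl, rfl⟩ := h1
      rw [if_pos ⟨rfl, hlt⟩, phi2 _ _ hlt, zpow_neg, inv_zpow]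
      ring
    · rw [if_neg h, mul_zero, zero_mul]

lemma Bm_apply (rc cc : Idx n × Idx n) : Bm n rc cc =
    (if cc = (rc.2, rc.1) then (if idxZ rc.2 < idxZ rc.1 then sg1 rc else 0) else 0)
    + (if cc = (ng rc.2, ng rc.1) then (if idxZ rc.2 < idxZ (ng rc.1) then sg2 rc else 0) else 0) := by
  simp only [Bm, Matrix.of_apply, ite_and]

lemma BB : (Bm n) * (Bm n) = 0 := by
  ext ⟨a, b⟩ ⟨c, d⟩
  rw [Matrix.mul_apply, Matrix.zero_apply]
  have step : ∀ ef : Idx n × Idx n, Bm n (a, b) ef * Bm n ef (c, d)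
      = (if ef = ((b, a) : Idx n × Idx n) then
          (if idxZ b < idxZ a then sg1 ((a, b) : Idx n × Idx n) * Bm n ef (c, d) else 0) else 0)
        + (if ef = ((ng b, ng a) : Idx n × Idx n) then
          (if idxZ b < idxZ (ng a) then sg2 ((a, b) : Idx n × Idx n) * Bm n ef (c, d) else 0) else 0) := by
    intro ef
    rw [Bm_apply, add_mul]
    congr 1 <;> split_ifs <;> ring
  rw [Finset.sum_congr rfl fun ef _ => step ef, Finset.sum_add_distrib,
    Finset.sum_ite_eq' Finset.univ, Finset.sum_ite_eq' Finset.univ,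
    if_pos (Finset.mem_univ _), if_pos (Finset.mem_univ _)]
  clear step
  rcases a with a|a <;> rcases b with b|b <;> rcases c with c|c <;> rcases d with d|d <;>
    simp only [Bm_apply] <;>
    simp only [ng, idxZ, pa, sg1, sg2, Prod.mk.injEq] <;>
    (try norm_num) <;>
    (try split_ifs) <;>
    (try simp only [Fin.ext_iff, Fin.lt_def] at *) <;>
    first | (exfalso; omega) | tauto | rfl | norm_num

lemma key (x : RatFunc ℚ) (hx : x ≠ 0) :
    thetaMat n x * thetaMat n x⁻¹ = 1 := by
  rw [split x, split x⁻¹, inv_inv]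
  rw [add_mul, mul_add, mul_add, Matrix.smul_mul, Matrix.smul_mul, Matrix.mul_smul,
    Matrix.mul_smul, Dmul x hx, BB, commL x]
  rw [smul_zero, smul_zero, add_zero]
  rw [show (x⁻¹ - x) = -(x - x⁻¹) by ring, neg_smul]
  abel


/-- `Θ(q) · Θ(q⁻¹) = 1 ⊗ 1`: `Θ(q)` is invertible in the superalgebra
`End(V) ⊗ End(V)` and its inverse is obtained by replacing `q` with `q⁻¹`. -/
theorem stmt6 (n : ℕ) :
    thetaMat n RatFunc.X * thetaMat n (RatFunc.X)⁻¹ = 1 ∧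
    thetaMat n (RatFunc.X)⁻¹ * thetaMat n RatFunc.X = 1 := by
  have hX : (RatFunc.X : RatFunc ℚ) ≠ 0 := RatFunc.X_ne_zero
  refine ⟨key _ hX, ?_⟩
  have h2 := key (n := n) (RatFunc.X : RatFunc ℚ)⁻¹ (inv_ne_zero hX)
  rwa [inv_inv] at h2
end

section
/- With Θ as above and J ⊗ 1 ∈ End(V) ⊗ End(V), one has Θ · (J ⊗ 1) = (J ⊗ 1) · Θ in the superalgebra End(V) ⊗ End(V), where J = Σ_{i ∈ I} (-1)^{p(i)} E_{-i,i}. -/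
/-- The matrix of `J ⊗ 1 ∈ End(V) ⊗ End(V)`, where `J = Σ_{i ∈ I} (-1)^{p(i)} E_{-i,i}`
(the second tensor factor is even, so no Koszul sign appears). -/
noncomputable def jOneMat (n : ℕ) :
    Matrix (Idx n × Idx n) (Idx n × Idx n) (RatFunc ℚ) :=
  Matrix.of fun rc cc =>
    if rc.2 = cc.2 ∧ rc.1 = ng cc.1 then (-1 : RatFunc ℚ) ^ pa cc.1 else 0

lemma key_s7 (n : ℕ) (a b c d : Idx n) :
    thetaMat n RatFunc.X (a, b) (ng c, d) * (-1 : RatFunc ℚ) ^ pa c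
      = (-1 : RatFunc ℚ) ^ pa (ng a) * thetaMat n RatFunc.X (ng a, b) (c, d) := by
  rcases a with a | a <;> rcases c with c | c <;>
    simp only [thetaMat, thetaCoeff, Matrix.of_apply, pa, ng, phiIdx, absIdx, idxZ] <;>
    rcases b with b | b <;> rcases d with d | d <;>
    simp [pa, ng, phiIdx, absIdx, idxZ, eq_comm (b := d), and_comm, Sum.inl.injEq, Sum.inr.injEq] <;>
    split_ifs <;> simp_all

/-- `Θ · (J ⊗ 1) = (J ⊗ 1) · Θ` in the superalgebra `End(V) ⊗ End(V)`. -/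
theorem stmt7 (n : ℕ) :
    thetaMat n RatFunc.X * jOneMat n = jOneMat n * thetaMat n RatFunc.X := by
  ext ⟨a, b⟩ ⟨c, d⟩
  rw [Matrix.mul_apply, Matrix.mul_apply]
  have hL : ∀ k : Idx n × Idx n,
      thetaMat n RatFunc.X (a, b) k * jOneMat n k (c, d)
        = if k = (ng c, d) then
            thetaMat n RatFunc.X (a, b) (ng c, d) * (-1 : RatFunc ℚ) ^ pa c else 0 := by
    rintro ⟨k1, k2⟩
    by_cases h1 : k2 = d <;> by_cases h2 : k1 = ng c <;>
      simp [jOneMat, Prod.ext_iff, h1, h2]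
  have hR : ∀ k : Idx n × Idx n,
      jOneMat n (a, b) k * thetaMat n RatFunc.X k (c, d)
        = if k = (ng a, b) then
            (-1 : RatFunc ℚ) ^ pa (ng a) * thetaMat n RatFunc.X (ng a, b) (c, d) else 0 := by
    have hng : ∀ i : Idx n, ng (ng i) = i := by rintro (i | i) <;> rfl
    rintro ⟨k1, k2⟩
    by_cases h : k1 = ng a ∧ k2 = b
    · obtain ⟨h2, h1⟩ := h; subst h2; subst h1
      simp [jOneMat, hng]
    · simp only [jOneMat, Matrix.of_apply, Prod.mk.injEq, if_neg h]
      rw [if_neg (fun hc => h ⟨by rw [hc.2, hng], hc.1.symm⟩)]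
      ring
  rw [Finset.sum_congr rfl fun k _ => hL k, Finset.sum_congr rfl fun k _ => hR k,
    Finset.sum_ite_eq' , Finset.sum_ite_eq']
  simp [key_s7 n a b c d]
end

section
/- In U_q(q_n), the square of the antipode is given by S²(u_{ij}) = q^{2|j| - 2|i|} u_{ij} for all generators u_{ij}, i ≤ j. Consequently the antipode S is invertible with S^{-1}(u_{ij}) = q^{2|i|-2|j|} S(u_{ij}). -/
/-- The base field `ℂ(q)`. -/
abbrev Kq := RatFunc ℂ

/-- The generator `q` of `ℂ(q)`. -/
noncomputable def qc : Kq := RatFunc.X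

/-- `z = q - q⁻¹`. -/
noncomputable def zc : Kq := qc - qc⁻¹

/-- Parity of an index. -/
def pz (i : ℤ) : ℕ := if i < 0 then 1 else 0

/-- `φ(i,j) = δ_{|i|,|j|} sgn(j)`. -/
def phiz (i j : ℤ) : ℤ := if |i| = |j| then (if j < 0 then -1 else 1) else 0

/-- `θ(i,j,k) = (-1)^{p(i)p(j) + p(j)p(k) + p(i)p(k)}`. -/
noncomputable def thz (i j k : ℤ) : Kq := (-1 : Kq) ^ (pz i * pz j + pz j * pz k + pz i * pz k)

/-- Membership in the index set `I = {±1, …, ±n}`. -/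
def inI (n : ℕ) (i : ℤ) : Prop := i ≠ 0 ∧ |i| ≤ (n : ℤ)

lemma qne : qc ≠ 0 := RatFunc.X_ne_zero

lemma qmul (a b : ℤ) : qc ^ a * qc ^ b = qc ^ (a + b) := (zpow_add₀ qne a b).symm

lemma neg_one_pow_mod (a : ℕ) : ((-1 : Kq)) ^ a = (-1) ^ (a % 2) := by
  conv_lhs => rw [← Nat.div_add_mod a 2]
  rw [pow_add, pow_mul]
  norm_num

lemma neg_one_pow_par {a b : ℕ} (h : a % 2 = b % 2) : ((-1 : Kq)) ^ a = (-1) ^ b := by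
  rw [neg_one_pow_mod a, neg_one_pow_mod b, h]

lemma neg_one_pow_even {a : ℕ} (h : a % 2 = 0) : ((-1 : Kq)) ^ a = 1 := by
  rw [neg_one_pow_mod a, h, pow_zero]

lemma zmodval (a b : ℕ) :
    ((-1 : Kq)) ^ (((a : ZMod 2)).val * ((b : ZMod 2)).val) = (-1 : Kq) ^ (a * b) := by
  rw [ZMod.val_natCast, ZMod.val_natCast]
  exact neg_one_pow_par (Nat.mul_mod a b 2).symm

lemma zc_mul_qpow (e : ℤ) : zc * qc ^ e = qc ^ (e + 1) - qc ^ (e - 1) := by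
  rw [zc, sub_mul]
  rw [show qc * qc ^ e = qc ^ (1:ℤ) * qc ^ e from by rw [zpow_one],
    show qc⁻¹ * qc ^ e = qc ^ (-1:ℤ) * qc ^ e from by rw [zpow_neg_one], qmul, qmul]
  rw [show (1:ℤ) + e = e + 1 by ring, show (-1) + e = e - 1 by ring]

lemma Icc_top (a b : ℤ) (h : a ≤ b + 1) :
    Finset.Icc a (b + 1) = insert (b + 1) (Finset.Icc a b) := by
  ext x
  simp only [Finset.mem_Icc, Finset.mem_insert]
  omega

lemma telA (a b c : ℤ) (h : a ≤ b + 1) :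
    zc * ∑ m ∈ Finset.Icc a b, qc ^ (c - 2 * m) = qc ^ (c - 2 * a + 1) - qc ^ (c - 2 * b - 1) := by
  obtain ⟨N, hN⟩ : ∃ N : ℕ, b = a - 1 + N := ⟨(b - (a - 1)).toNat, by omega⟩
  subst hN
  clear h
  induction N with
  | zero =>
    rw [show a - 1 + (0 : ℕ) = a - 1 by omega, Finset.Icc_eq_empty (by omega)]
    simp only [Finset.sum_empty, mul_zero]
    rw [show c - 2 * a + 1 = c - 2 * (a - 1) - 1 by ring, sub_self]
  | succ N ih =>
    rw [show a - 1 + (N + 1 : ℕ) = (a - 1 + N) + 1 by push_cast; ring,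
      Icc_top a (a - 1 + N) (by omega), Finset.sum_insert (by simp [Finset.mem_Icc])]
    rw [mul_add, ih, zc_mul_qpow,
      show c - 2 * (a - 1 + (N:ℤ) + 1) + 1 = c - 2 * (a - 1 + (N:ℤ)) - 1 by ring]
    ring

lemma telB (a b c : ℤ) (h : a ≤ b + 1) :
    zc * ∑ m ∈ Finset.Icc a b, qc ^ (c + 2 * m) = qc ^ (c + 2 * b + 1) - qc ^ (c + 2 * a - 1) := by
  obtain ⟨N, hN⟩ : ∃ N : ℕ, b = a - 1 + N := ⟨(b - (a - 1)).toNat, by omega⟩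
  subst hN
  clear h
  induction N with
  | zero =>
    rw [show a - 1 + (0 : ℕ) = a - 1 by omega, Finset.Icc_eq_empty (by omega)]
    simp only [Finset.sum_empty, mul_zero]
    rw [show c + 2 * (a - 1) + 1 = c + 2 * a - 1 by ring, sub_self]
  | succ N ih =>
    rw [show a - 1 + (N + 1 : ℕ) = (a - 1 + N) + 1 by push_cast; ring,
      Icc_top a (a - 1 + N) (by omega), Finset.sum_insert (by simp [Finset.mem_Icc])]
    rw [mul_add, ih, zc_mul_qpow,
      show c + 2 * (a - 1 + (N:ℤ) + 1) - 1 = c + 2 * (a - 1 + (N:ℤ)) + 1 by ring]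
    ring

lemma phiz_neg_right (a k : ℤ) (hk : k ≠ 0) : phiz a (-k) = - phiz a k := by
  unfold phiz
  rw [abs_neg]
  by_cases h : |a| = |k|
  · rw [if_pos h, if_pos h]
    rcases hk.lt_or_gt with h1 | h1
    · rw [if_neg (by omega), if_pos h1]; norm_num
    · rw [if_pos (by omega), if_neg (by omega)]
  · rw [if_neg h, if_neg h, neg_zero]

lemma phiz_add_self (m i : ℤ) (hmi : m ≠ i) : phiz m i + phiz i m = 0 := by
  unfold phiz
  by_cases h : |m| = |i|
  · rw [if_pos h, if_pos h.symm]
    rcases abs_eq_abs.1 h with h1 | h1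
    · omega
    · subst h1
      rcases lt_trichotomy i 0 with h2 | h2 | h2 <;> simp [h2] <;> omega
  · rw [if_neg h, if_neg (fun hh => h hh.symm), add_zero]

lemma pz01 (i : ℤ) : pz i = 0 ∨ pz i = 1 := by unfold pz; split <;> simp

lemma pz_neg {i : ℤ} (h : i < 0) : pz i = 1 := by simp [pz, h]

lemma pz_nonneg {i : ℤ} (h : ¬ i < 0) : pz i = 0 := by simp [pz, h]

lemma thz_one (a b c : ℤ) (ha : ¬ a < 0) (h : ¬ b < 0 ∨ ¬ c < 0) : thz a b c = 1 := by
  unfold thz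
  rw [pz_nonneg ha]
  rcases h with h | h
  · rw [pz_nonneg h]; norm_num
  · rw [pz_nonneg h]; norm_num

noncomputable def gcsc (i m j : ℤ) : Kq :=
  (-1 : Kq) ^ ((pz i + pz m) * (pz m + pz j)) * qc ^ (2 * |j| - 2 * |m|)

lemma ScA (i r m j : ℤ) (hi : i ≠ 0) (hir : i < r) (hrm : r ≤ m) :
    gcsc i m j * qc ^ (phiz m (-i) - phiz j (-i)) *
      (qc ^ (-phiz i m) * ((-1 : Kq) ^ ((pz i + pz r) * (pz m + pz j)) * qc ^ (phiz r j)))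
    = qc ^ (phiz r j - phiz j (-i)) * gcsc r m j := by
  unfold gcsc
  have hs : ((-1 : Kq)) ^ ((pz i + pz m) * (pz m + pz j)) *
      ((-1 : Kq)) ^ ((pz i + pz r) * (pz m + pz j))
      = ((-1 : Kq)) ^ ((pz r + pz m) * (pz m + pz j)) := by
    rw [← pow_add]
    refine neg_one_pow_par ?_
    have : (pz i + pz m) * (pz m + pz j) + (pz i + pz r) * (pz m + pz j)
        = (pz r + pz m) * (pz m + pz j) + 2 * (pz i * (pz m + pz j)) := by ring
    omega
  have hq : qc ^ (2*|j| - 2*|m|) * qc ^ (phiz m (-i) - phiz j (-i)) *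
      (qc ^ (-phiz i m) * qc ^ (phiz r j))
      = qc ^ (phiz r j - phiz j (-i)) * qc ^ (2*|j| - 2*|m|) := by
    rw [qmul, qmul, qmul, qmul]
    congr 1
    rw [phiz_neg_right m i hi]
    have h2 := phiz_add_self m i (by omega)
    linarith
  calc ((-1 : Kq)) ^ ((pz i + pz m) * (pz m + pz j)) * qc ^ (2*|j| - 2*|m|) *
        qc ^ (phiz m (-i) - phiz j (-i)) *
        (qc ^ (-phiz i m) * ((-1 : Kq) ^ ((pz i + pz r) * (pz m + pz j)) * qc ^ (phiz r j)))
      = (((-1 : Kq)) ^ ((pz i + pz m) * (pz m + pz j)) *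
          ((-1 : Kq)) ^ ((pz i + pz r) * (pz m + pz j))) *
        (qc ^ (2*|j| - 2*|m|) * qc ^ (phiz m (-i) - phiz j (-i)) *
          (qc ^ (-phiz i m) * qc ^ (phiz r j))) := by ring
    _ = ((-1 : Kq)) ^ ((pz r + pz m) * (pz m + pz j)) *
        (qc ^ (phiz r j - phiz j (-i)) * qc ^ (2*|j| - 2*|m|)) := by rw [hs, hq]
    _ = qc ^ (phiz r j - phiz j (-i)) *
        (((-1 : Kq)) ^ ((pz r + pz m) * (pz m + pz j)) * qc ^ (2*|j| - 2*|m|)) := by ring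

lemma ScB (i m j : ℤ) (hi : i ≠ 0) (him : i < m) :
    gcsc i m j * qc ^ (phiz m (-i) - phiz j (-i)) * (qc ^ (-phiz i m) * zc * thz i m m)
    = zc * qc ^ (-phiz j (-i)) *
        ((-1 : Kq) ^ (pz i * pz m + pz m * pz j + pz i * pz j) * qc ^ (2 * |j| - 2 * |m|)) := by
  unfold gcsc thz
  have hs : ((-1 : Kq)) ^ ((pz i + pz m) * (pz m + pz j)) *
      ((-1 : Kq)) ^ (pz i * pz m + pz m * pz m + pz i * pz m)
      = ((-1 : Kq)) ^ (pz i * pz m + pz m * pz j + pz i * pz j) := by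
    rw [← pow_add]
    refine neg_one_pow_par ?_
    have : (pz i + pz m) * (pz m + pz j) + (pz i * pz m + pz m * pz m + pz i * pz m)
        = (pz i * pz m + pz m * pz j + pz i * pz j) + 2 * (pz m * pz m + pz i * pz m) := by ring
    omega
  have hq : qc ^ (2*|j| - 2*|m|) * qc ^ (phiz m (-i) - phiz j (-i)) * qc ^ (-phiz i m)
      = qc ^ (-phiz j (-i)) * qc ^ (2*|j| - 2*|m|) := by
    rw [qmul, qmul, qmul]
    congr 1
    rw [phiz_neg_right m i hi]
    have h2 := phiz_add_self m i (by omega)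
    linarith
  calc ((-1 : Kq)) ^ ((pz i + pz m) * (pz m + pz j)) * qc ^ (2*|j| - 2*|m|) *
        qc ^ (phiz m (-i) - phiz j (-i)) *
        (qc ^ (-phiz i m) * zc * ((-1:Kq)) ^ (pz i * pz m + pz m * pz m + pz i * pz m))
      = zc * ((((-1 : Kq)) ^ ((pz i + pz m) * (pz m + pz j)) *
          ((-1 : Kq)) ^ (pz i * pz m + pz m * pz m + pz i * pz m)) *
          (qc ^ (2*|j| - 2*|m|) * qc ^ (phiz m (-i) - phiz j (-i)) * qc ^ (-phiz i m))) := by ring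
    _ = zc * (((-1 : Kq)) ^ (pz i * pz m + pz m * pz j + pz i * pz j) *
          (qc ^ (-phiz j (-i)) * qc ^ (2*|j| - 2*|m|))) := by rw [hs, hq]
    _ = zc * qc ^ (-phiz j (-i)) *
        (((-1 : Kq)) ^ (pz i * pz m + pz m * pz j + pz i * pz j) * qc ^ (2*|j| - 2*|m|)) := by ring

lemma ScC (i r m j : ℤ) (hir : i < r) (hrm : r ≤ m) (hmj : m ≤ j)
    (h1 : i ≤ -j) (h2 : -j < r) (h3 : r ≤ -m) (hm0 : m ≠ 0) (hr0 : r ≠ 0) :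
    gcsc i m j * qc ^ (phiz m (-i) - phiz j (-i)) * (qc ^ (-phiz i m) * zc * thz (-i) (-r) m)
    = (zc * qc ^ (-phiz j (-i) + (2 * |j| + 2 * r))) * gcsc r m (-r) := by
  have hr : r < 0 := by omega
  have hj : 0 < j := by omega
  have hi : i < 0 := by omega
  have hth : thz (-i) (-r) m = 1 := thz_one _ _ _ (by omega) (Or.inl (by omega))
  have hs1 : ((-1 : Kq)) ^ ((pz i + pz m) * (pz m + pz j)) = 1 := by
    rw [pz_neg hi, pz_nonneg (by omega : ¬ j < 0)]
    refine neg_one_pow_even ?_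
    rcases pz01 m with h | h <;> rw [h]
  have hs2 : ((-1 : Kq)) ^ ((pz r + pz m) * (pz m + pz (-r))) = 1 := by
    rw [pz_neg hr, pz_nonneg (by omega : ¬ -r < 0)]
    refine neg_one_pow_even ?_
    rcases pz01 m with h | h <;> rw [h]
  unfold gcsc
  rw [hth, hs1, hs2, one_mul, one_mul, mul_one]
  rw [show qc ^ (2*|j| - 2*|m|) * qc ^ (phiz m (-i) - phiz j (-i)) * (qc ^ (-phiz i m) * zc)
    = zc * (qc ^ (2*|j| - 2*|m|) * qc ^ (phiz m (-i) - phiz j (-i)) * qc ^ (-phiz i m)) from by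
      ring]
  rw [qmul, qmul, mul_assoc, qmul]
  congr 1
  rw [phiz_neg_right m i (by omega)]
  have hphi := phiz_add_self m i (by omega)
  have habs : |(-r)| = -r := abs_of_pos (by omega)
  rw [habs]
  congr 1
  linarith

lemma phiz_self_neg (i : ℤ) (hi : i ≠ 0) : phiz i (-i) = - (if i < 0 then (-1:ℤ) else 1) := by
  rw [phiz_neg_right i i hi]
  unfold phiz
  rw [if_pos rfl]

lemma key_scalar (i j : ℤ) (hi : i ≠ 0) (hj : j ≠ 0) (hij : i < j) :
    gcsc i i j * qc ^ (phiz i (-i) - phiz j (-i))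
      - qc ^ (phiz j j - phiz j (-i))
      - zc * qc ^ (-phiz j (-i)) *
          ∑ m ∈ (Finset.Ioo i j).filter (fun m => m ≠ 0),
            ((-1 : Kq)) ^ (pz i * pz m + pz m * pz j + pz i * pz j) * qc ^ (2 * |j| - 2 * |m|)
      = 0 := by
  have hsg : gcsc i i j = qc ^ (2 * |j| - 2 * |i|) := by
    unfold gcsc
    rw [neg_one_pow_even (by
      have h : (pz i + pz i) * (pz i + pz j) = 2 * (pz i * (pz i + pz j)) := by ring
      omega), one_mul]
  rw [hsg]
  have hphijj : phiz j j = if j < 0 then (-1:ℤ) else 1 := by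
    unfold phiz; rw [if_pos rfl]
  have main : qc ^ (2 * |j| - 2 * |i|) * qc ^ (phiz i (-i))
      - qc ^ (phiz j j)
      - zc * ∑ m ∈ (Finset.Ioo i j).filter (fun m => m ≠ 0),
          ((-1 : Kq)) ^ (pz i * pz m + pz m * pz j + pz i * pz j) * qc ^ (2 * |j| - 2 * |m|)
      = 0 := by
    rcases lt_trichotomy i 0 with hi0 | hi0 | hi0
    · rcases lt_trichotomy j 0 with hj0 | hj0 | hj0
      · have hset : (Finset.Ioo i j).filter (fun m => m ≠ 0) = Finset.Icc (i+1) (j-1) := by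
          ext x; simp only [Finset.mem_filter, Finset.mem_Ioo, Finset.mem_Icc]; omega
        have hterm : ∀ m ∈ Finset.Icc (i+1) (j-1),
            ((-1 : Kq)) ^ (pz i * pz m + pz m * pz j + pz i * pz j) * qc ^ (2 * |j| - 2 * |m|)
            = - qc ^ ((-2*j) + 2 * m) := by
          intro m hm
          simp only [Finset.mem_Icc] at hm
          rw [pz_neg hi0, pz_neg hj0, pz_neg (by omega : m < 0)]
          rw [abs_of_neg hj0, abs_of_neg (by omega : m < 0)]
          norm_num
        rw [hset, Finset.sum_congr rfl hterm, Finset.sum_neg_distrib]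
        rw [mul_neg, telB (i+1) (j-1) (-2*j) (by omega)]
        rw [phiz_self_neg i hi, hphijj, if_pos hi0, if_pos hj0]
        rw [abs_of_neg hi0, abs_of_neg hj0, qmul]
        rw [show 2 * -j - 2 * -i + - -1 = -2*j + 2*(i+1) - 1 by ring]
        ring
      · omega
      · have hset : (Finset.Ioo i j).filter (fun m => m ≠ 0)
            = Finset.Icc (i+1) (-1) ∪ Finset.Icc 1 (j-1) := by
          ext x
          simp only [Finset.mem_filter, Finset.mem_Ioo, Finset.mem_Icc, Finset.mem_union]
          omega
        have hdisj : Disjoint (Finset.Icc (i+1) (-1:ℤ)) (Finset.Icc 1 (j-1)) := by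
          rw [Finset.disjoint_left]
          intro x h1 h2
          simp only [Finset.mem_Icc] at h1 h2
          omega
        have hterm1 : ∀ m ∈ Finset.Icc (i+1) (-1:ℤ),
            ((-1 : Kq)) ^ (pz i * pz m + pz m * pz j + pz i * pz j) * qc ^ (2 * |j| - 2 * |m|)
            = - qc ^ ((2*j) + 2 * m) := by
          intro m hm
          simp only [Finset.mem_Icc] at hm
          rw [pz_neg hi0, pz_nonneg (by omega : ¬ j < 0), pz_neg (by omega : m < 0)]
          rw [abs_of_pos hj0, abs_of_neg (by omega : m < 0)]
          norm_num
        have hterm2 : ∀ m ∈ Finset.Icc (1:ℤ) (j-1),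
            ((-1 : Kq)) ^ (pz i * pz m + pz m * pz j + pz i * pz j) * qc ^ (2 * |j| - 2 * |m|)
            = qc ^ ((2*j) - 2 * m) := by
          intro m hm
          simp only [Finset.mem_Icc] at hm
          rw [pz_neg hi0, pz_nonneg (by omega : ¬ j < 0), pz_nonneg (by omega : ¬ m < 0)]
          rw [abs_of_pos hj0, abs_of_pos (by omega : 0 < m)]
          norm_num
        rw [hset, Finset.sum_union hdisj, Finset.sum_congr rfl hterm1,
          Finset.sum_congr rfl hterm2, Finset.sum_neg_distrib]
        rw [mul_add, mul_neg, telB (i+1) (-1) (2*j) (by omega), telA 1 (j-1) (2*j) (by omega)]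
        rw [phiz_self_neg i hi, hphijj, if_pos hi0, if_neg (by omega : ¬ j < 0)]
        rw [abs_of_neg hi0, abs_of_pos hj0, qmul]
        rw [show 2 * j - 2 * -i + - -1 = 2*j + 2*(i+1) - 1 by ring,
          show 2*j + 2*(-1) + 1 = 2*j - 2*1 + 1 by ring]
        ring
    · omega
    · have hset : (Finset.Ioo i j).filter (fun m => m ≠ 0) = Finset.Icc (i+1) (j-1) := by
        ext x; simp only [Finset.mem_filter, Finset.mem_Ioo, Finset.mem_Icc]; omega
      have hterm : ∀ m ∈ Finset.Icc (i+1) (j-1),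
          ((-1 : Kq)) ^ (pz i * pz m + pz m * pz j + pz i * pz j) * qc ^ (2 * |j| - 2 * |m|)
          = qc ^ ((2*j) - 2 * m) := by
        intro m hm
        simp only [Finset.mem_Icc] at hm
        rw [pz_nonneg (by omega : ¬ i < 0), pz_nonneg (by omega : ¬ j < 0),
          pz_nonneg (by omega : ¬ m < 0)]
        rw [abs_of_pos (by omega : (0:ℤ) < j), abs_of_pos (by omega : 0 < m)]
        norm_num
      rw [hset, Finset.sum_congr rfl hterm, telA (i+1) (j-1) (2*j) (by omega)]
      rw [phiz_self_neg i hi, hphijj, if_neg (by omega : ¬ i < 0), if_neg (by omega : ¬ j < 0)]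
      rw [abs_of_pos (by omega : (0:ℤ) < j), abs_of_pos hi0, qmul]
      rw [show 2 * j - 2 * i + -1 = 2*j - 2*(i+1) + 1 by ring,
        show 2*j - 2*(j-1) - 1 = (1:ℤ) by ring]
      ring
  have e1 : qc ^ (phiz i (-i) - phiz j (-i)) = qc ^ (phiz i (-i)) * qc ^ (-phiz j (-i)) := by
    rw [qmul, Int.sub_eq_add_neg]
  have e2 : qc ^ (phiz j j - phiz j (-i)) = qc ^ (phiz j j) * qc ^ (-phiz j (-i)) := by
    rw [qmul, Int.sub_eq_add_neg]
  rw [e1, e2]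
  linear_combination qc ^ (-phiz j (-i)) * main

set_option maxHeartbeats 2000000 in
/-- In the quantum isomeric Hopf superalgebra `U_q(q_n)` (encoded by a `ℂ(q)`-superalgebra
`A`, with `ℤ/2`-grading `𝒜`, generated by elements `u i j` satisfying the defining
relations, together with a linear antipode `S` which is a parity-preserving super-algebra
antihomomorphism satisfying the antipode identities coming from `L⁻¹`):
`S²(u_{ij}) = q^{2|j| - 2|i|} u_{ij}` for all generators, and consequently `S` is invertible
with `S⁻¹(u_{ij}) = q^{2|i| - 2|j|} S(u_{ij})`. -/
theorem stmt11 (n : ℕ) (A : Type*) [Ring A] [Algebra Kq A]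
    (𝒜 : ZMod 2 → Submodule Kq A) [GradedAlgebra 𝒜]
    (u : ℤ → ℤ → A) (S : A →ₗ[Kq] A)
    (hinv : ∀ i : ℤ, inI n i →
      u i i * u (-i) (-i) = 1 ∧ u (-i) (-i) * u i i = 1)
    (hrel : ∀ i j k l : ℤ, inI n i → inI n j → inI n k → inI n l → i ≤ j → k ≤ l →
      algebraMap Kq A ((-1) ^ ((pz i + pz j) * (pz k + pz l)) * qc ^ phiz j l) *
          (u i j * u k l)
        + algebraMap Kq A (zc * (if i ≤ l then 1 else 0) * (if k ≤ j ∧ j < l then 1 else 0) *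
            thz i j k) * (u i l * u k j)
        + algebraMap Kq A (zc * (if i ≤ -l ∧ -l < j ∧ j ≤ -k then 1 else 0) *
            thz (-i) (-j) k) * (u i (-l) * u k (-j))
      = algebraMap Kq A (qc ^ phiz i k) * (u k l * u i j)
        + algebraMap Kq A (zc * (if k < i ∧ i ≤ l then 1 else 0) * (if k ≤ j then 1 else 0) *
            thz i j k) * (u i l * u k j)
        + algebraMap Kq A (zc * (if -l ≤ i ∧ i < -k ∧ -k ≤ j then 1 else 0) *
            thz (-i) (-j) k) * (u (-i) l * u (-k) j))
    (hu : ∀ i j : ℤ, inI n i → inI n j → i ≤ j →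
      u i j ∈ 𝒜 (((pz i + pz j : ℕ) : ZMod 2)))
    (hgen : Algebra.adjoin Kq {w : A | ∃ i j : ℤ, inI n i ∧ inI n j ∧ i ≤ j ∧ w = u i j} = ⊤)
    (hS1 : S 1 = 1)
    (hSgr : ∀ (r : ZMod 2) (x : A), x ∈ 𝒜 r → S x ∈ 𝒜 r)
    (hSanti : ∀ (r s : ZMod 2) (x y : A), x ∈ 𝒜 r → y ∈ 𝒜 s →
      S (x * y) = ((-1 : Kq) ^ (r.val * s.val)) • (S y * S x))
    (hantipode1 : ∀ i j : ℤ, inI n i → inI n j → i ≤ j →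
      ∑ m ∈ (Finset.Icc i j).filter (fun m => m ≠ 0), S (u i m) * u m j =
        if i = j then 1 else 0)
    (hantipode2 : ∀ i j : ℤ, inI n i → inI n j → i ≤ j →
      ∑ m ∈ (Finset.Icc i j).filter (fun m => m ≠ 0), u i m * S (u m j) =
        if i = j then 1 else 0) :
    (∀ i j : ℤ, inI n i → inI n j → i ≤ j →
      S (S (u i j)) = (qc ^ (2 * |j| - 2 * |i|)) • u i j) ∧
    ∃ T : A →ₗ[Kq] A, T.comp S = LinearMap.id ∧ S.comp T = LinearMap.id ∧
      ∀ i j : ℤ, inI n i → inI n j → i ≤ j →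
        T (u i j) = (qc ^ (2 * |i| - 2 * |j|)) • S (u i j) := by
  classical
  -- index set helpers
  have hIneg : ∀ i : ℤ, inI n i → inI n (-i) := by
    intro i ⟨h1, h2⟩
    exact ⟨neg_ne_zero.2 h1, by rwa [abs_neg]⟩
  have hIbet : ∀ i j m : ℤ, inI n i → inI n j → i ≤ m → m ≤ j → m ≠ 0 → inI n m := by
    intro i j m hi hj h1 h2 h3
    refine ⟨h3, ?_⟩
    have := hi.2; have := hj.2
    rw [abs_le] at *
    omega
  -- diagonal commutation
  have hDiag : ∀ a c k : ℤ, inI n a → inI n c → inI n k → a ≤ c →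
      u a c * u k k = qc ^ (phiz a k - phiz c k) • (u k k * u a c) := by
    intro a c k ha hc hk hac
    have h := hrel a c k k ha hc hk hk hac le_rfl
    rw [if_neg (by omega : ¬ (k ≤ c ∧ c < k)), if_neg (by omega : ¬ (k < a ∧ a ≤ k)),
      if_neg (by omega : ¬ (a ≤ -k ∧ -k < c ∧ c ≤ -k)),
      if_neg (by omega : ¬ (-k ≤ a ∧ a < -k ∧ -k ≤ c))] at h
    rw [neg_one_pow_even (a := (pz a + pz c) * (pz k + pz k)) (by
      have : (pz a + pz c) * (pz k + pz k) = 2 * ((pz a + pz c) * pz k) := by ring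
      omega), one_mul] at h
    simp only [mul_zero, zero_mul, map_zero, add_zero] at h
    rw [← Algebra.smul_def, ← Algebra.smul_def] at h
    have h2 := congrArg (fun x => qc ^ (-phiz c k) • x) h
    simp only [smul_smul, qmul] at h2
    rw [show -phiz c k + phiz c k = 0 by ring, zpow_zero, one_smul,
      show -phiz c k + phiz a k = phiz a k - phiz c k by ring] at h2
    exact h2
  -- the recursion for S (u p m)
  have hBexp : ∀ p m : ℤ, inI n p → inI n m → p ≤ m →
      S (u p m) = u (-p) (-p) * ((if p = m then (1:A) else 0)
        - ∑ r ∈ (Finset.Ioc p m).filter (fun r => r ≠ 0), u p r * S (u r m)) := by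
    intro p m hp hm hpm
    have h := hantipode2 p m hp hm hpm
    have hp0 := hp.1
    have hsplit : (Finset.Icc p m).filter (fun r => r ≠ 0)
        = insert p ((Finset.Ioc p m).filter (fun r => r ≠ 0)) := by
      ext x
      simp only [Finset.mem_filter, Finset.mem_Icc, Finset.mem_Ioc, Finset.mem_insert]
      omega
    rw [hsplit, Finset.sum_insert (by
      simp only [Finset.mem_filter, Finset.mem_Ioc]
      omega)] at h
    have h2 := congrArg (fun x => u (-p) (-p) * x) h
    rw [mul_add, ← mul_assoc, (hinv p hp).2, one_mul] at h2
    rw [mul_sub, eq_sub_iff_add_eq]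
    exact h2
  -- singleton diagonal antipode identities
  have hdiag1 : ∀ i : ℤ, inI n i → S (u i i) * u i i = 1 := by
    intro i hi
    have h := hantipode1 i i hi hi le_rfl
    rw [Finset.Icc_self, Finset.filter_singleton, if_pos hi.1, Finset.sum_singleton,
      if_pos rfl] at h
    exact h
  have hdiag2 : ∀ i : ℤ, inI n i → u i i * S (u i i) = 1 := by
    intro i hi
    have h := hantipode2 i i hi hi le_rfl
    rw [Finset.Icc_self, Finset.filter_singleton, if_pos hi.1, Finset.sum_singleton,
      if_pos rfl] at h
    exact h
  -- THE KEY IDENTITY (G1)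
  have hdiagG1 : ∀ i : ℤ, inI n i →
      ∑ m ∈ (Finset.Icc i i).filter (fun m => m ≠ 0),
        gcsc i m i • (u m i * S (u i m)) = if i = i then 1 else 0 := by
    intro i hi
    rw [Finset.Icc_self, Finset.filter_singleton, if_pos hi.1, Finset.sum_singleton,
      if_pos rfl, hdiag2 i hi]
    rw [show gcsc i i i = 1 from by
      unfold gcsc
      rw [sub_self, zpow_zero, mul_one]
      exact neg_one_pow_even (by
        have : (pz i + pz i) * (pz i + pz i) = 2 * (pz i * (pz i + pz i)) := by ring
        omega)]
    rw [one_smul]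
  have hG1 : ∀ N : ℕ, ∀ i j : ℤ, inI n i → inI n j → i ≤ j → (j - i).toNat ≤ N →
      ∑ m ∈ (Finset.Icc i j).filter (fun m => m ≠ 0),
        gcsc i m j • (u m j * S (u i m)) = if i = j then 1 else 0 := by
    intro N
    induction N with
    | zero =>
      intro i j hi hj hij hN
      have hij' : i = j := by omega
      subst hij'
      exact hdiagG1 i hi
    | succ N ih =>
      intro i j hi hj hij hN
      by_cases hij' : i = j
      · subst hij'
        exact hdiagG1 i hi
      · have hlt : i < j := lt_of_le_of_ne hij hij'
        have hi0 := hi.1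
        have hj0 := hj.1
        -- Step 1 : expand S (u i m) and move u (-i)(-i) to the front
        have step1 : ∀ m ∈ (Finset.Icc i j).filter (fun m => m ≠ 0),
            gcsc i m j • (u m j * S (u i m))
            = u (-i) (-i) * ((gcsc i m j * qc ^ (phiz m (-i) - phiz j (-i))) •
                (u m j * ((if i = m then (1:A) else 0)
                  - ∑ r ∈ (Finset.Ioc i m).filter (fun r => r ≠ 0), u i r * S (u r m)))) := by
          intro m hm
          simp only [Finset.mem_filter, Finset.mem_Icc] at hm
          have hmI : inI n m := hIbet i j m hi hj hm.1.1 hm.1.2 hm.2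
          rw [hBexp i m hi hmI hm.1.1, ← mul_assoc,
            hDiag m j (-i) hmI hj (hIneg i hi) hm.1.2, smul_mul_assoc, mul_assoc, smul_smul,
            mul_smul_comm]
        rw [Finset.sum_congr rfl step1, ← Finset.mul_sum]
        -- Step 2 : split the inner difference
        have step2 : ∑ m ∈ (Finset.Icc i j).filter (fun m => m ≠ 0),
            (gcsc i m j * qc ^ (phiz m (-i) - phiz j (-i))) •
                (u m j * ((if i = m then (1:A) else 0)
                  - ∑ r ∈ (Finset.Ioc i m).filter (fun r => r ≠ 0), u i r * S (u r m)))
            = (∑ m ∈ (Finset.Icc i j).filter (fun m => m ≠ 0),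
                (gcsc i m j * qc ^ (phiz m (-i) - phiz j (-i))) •
                  (u m j * (if i = m then (1:A) else 0)))
              - ∑ m ∈ (Finset.Icc i j).filter (fun m => m ≠ 0),
                  ∑ r ∈ (Finset.Ioc i m).filter (fun r => r ≠ 0),
                    (gcsc i m j * qc ^ (phiz m (-i) - phiz j (-i))) •
                      (u m j * (u i r * S (u r m))) := by
          rw [← Finset.sum_sub_distrib]
          refine Finset.sum_congr rfl fun m hm => ?_
          rw [mul_sub, smul_sub, Finset.mul_sum, Finset.smul_sum]
        rw [step2]
        -- Step 3 : the delta part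
        have step3 : ∑ m ∈ (Finset.Icc i j).filter (fun m => m ≠ 0),
            (gcsc i m j * qc ^ (phiz m (-i) - phiz j (-i))) •
              (u m j * (if i = m then (1:A) else 0))
            = (gcsc i i j * qc ^ (phiz i (-i) - phiz j (-i))) • u i j := by
          rw [Finset.sum_eq_single_of_mem i (by
            simp only [Finset.mem_filter, Finset.mem_Icc]
            omega)]
          · rw [if_pos rfl, mul_one]
          · intro m hm hmne
            rw [if_neg (fun hh => hmne hh.symm), mul_zero, smul_zero]
        rw [step3]
        -- Step 5 : the swap identity for each pair (m, r)
        have hswap : ∀ m ∈ (Finset.Icc i j).filter (fun m => m ≠ 0),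
            ∀ r ∈ (Finset.Ioc i m).filter (fun r => r ≠ 0),
            (gcsc i m j * qc ^ (phiz m (-i) - phiz j (-i))) • (u m j * (u i r * S (u r m)))
            = (qc ^ (phiz r j - phiz j (-i)) * gcsc r m j) • (u i r * (u m j * S (u r m)))
              + ((gcsc i m j * qc ^ (phiz m (-i) - phiz j (-i)))
                  * (qc ^ (-phiz i m) * zc * thz i r m)
                  * (if r = m ∧ m < j then 1 else 0)) • (u i j * (u m r * S (u r m)))
              + ((gcsc i m j * qc ^ (phiz m (-i) - phiz j (-i)))
                  * (qc ^ (-phiz i m) * zc * thz (-i) (-r) m)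
                  * (if i ≤ -j ∧ -j < r ∧ r ≤ -m then 1 else 0)) •
                  (u i (-j) * (u m (-r) * S (u r m)))
              - ((gcsc i m j * qc ^ (phiz m (-i) - phiz j (-i)))
                  * (qc ^ (-phiz i m) * zc * thz (-i) (-r) m)
                  * (if -j ≤ i ∧ i < -m ∧ -m ≤ r then 1 else 0)) •
                  (u (-i) j * (u (-m) r * S (u r m))) := by
          intro m hm r hr
          simp only [Finset.mem_filter, Finset.mem_Icc] at hm
          simp only [Finset.mem_filter, Finset.mem_Ioc] at hr
          have hmI : inI n m := hIbet i j m hi hj hm.1.1 hm.1.2 hm.2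
          have hrI : inI n r := hIbet i j r hi hj (le_of_lt hr.1.1) (le_trans hr.1.2 hm.1.2) hr.2
          have h := hrel i r m j hi hrI hmI hj (le_of_lt hr.1.1) hm.1.2
          rw [if_pos (le_of_lt hlt)] at h
          rw [show (if m ≤ r ∧ r < j then (1:Kq) else 0) = (if r = m ∧ m < j then 1 else 0)
            from by
              by_cases hc : r = m ∧ m < j
              · rw [if_pos (by omega), if_pos hc]
              · rw [if_neg (by omega), if_neg hc]] at h
          rw [if_neg (by omega : ¬ (m < i ∧ i ≤ j))] at h
          simp only [mul_zero, zero_mul, map_zero, zero_add, add_zero, mul_one] at h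
          rw [← Algebra.smul_def, ← Algebra.smul_def, ← Algebra.smul_def, ← Algebra.smul_def,
            ← Algebra.smul_def] at h
          have hsolve : u m j * u i r
              = qc ^ (-phiz i m) •
                  (((-1:Kq) ^ ((pz i + pz r) * (pz m + pz j)) * qc ^ phiz r j) •
                      (u i r * u m j)
                    + (zc * (if r = m ∧ m < j then (1:Kq) else 0) * thz i r m) •
                        (u i j * u m r)
                    + (zc * (if i ≤ -j ∧ -j < r ∧ r ≤ -m then (1:Kq) else 0) *
                        thz (-i) (-r) m) • (u i (-j) * u m (-r))
                    - (zc * (if -j ≤ i ∧ i < -m ∧ -m ≤ r then (1:Kq) else 0) *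
                        thz (-i) (-r) m) • (u (-i) j * u (-m) r)) := by
            have h2 : (qc ^ phiz i m) • (u m j * u i r)
                = ((-1:Kq) ^ ((pz i + pz r) * (pz m + pz j)) * qc ^ phiz r j) •
                      (u i r * u m j)
                  + (zc * (if r = m ∧ m < j then (1:Kq) else 0) * thz i r m) •
                      (u i j * u m r)
                  + (zc * (if i ≤ -j ∧ -j < r ∧ r ≤ -m then (1:Kq) else 0) *
                      thz (-i) (-r) m) • (u i (-j) * u m (-r))
                  - (zc * (if -j ≤ i ∧ i < -m ∧ -m ≤ r then (1:Kq) else 0) *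
                      thz (-i) (-r) m) • (u (-i) j * u (-m) r) := by
              exact eq_sub_of_add_eq h.symm
            have h3 := congrArg (fun x => qc ^ (-phiz i m) • x) h2
            rw [smul_smul, qmul, show -phiz i m + phiz i m = 0 by ring, zpow_zero,
              one_smul] at h3
            exact h3
          calc (gcsc i m j * qc ^ (phiz m (-i) - phiz j (-i))) •
                (u m j * (u i r * S (u r m)))
              = (gcsc i m j * qc ^ (phiz m (-i) - phiz j (-i))) •
                ((u m j * u i r) * S (u r m)) := by rw [mul_assoc]
            _ = (gcsc i m j * qc ^ (phiz m (-i) - phiz j (-i))) •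
                ((qc ^ (-phiz i m) •
                  (((-1:Kq) ^ ((pz i + pz r) * (pz m + pz j)) * qc ^ phiz r j) •
                      (u i r * u m j)
                    + (zc * (if r = m ∧ m < j then (1:Kq) else 0) * thz i r m) •
                        (u i j * u m r)
                    + (zc * (if i ≤ -j ∧ -j < r ∧ r ≤ -m then (1:Kq) else 0) *
                        thz (-i) (-r) m) • (u i (-j) * u m (-r))
                    - (zc * (if -j ≤ i ∧ i < -m ∧ -m ≤ r then (1:Kq) else 0) *
                        thz (-i) (-r) m) • (u (-i) j * u (-m) r))) * S (u r m)) := by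
                rw [hsolve]
            _ = (qc ^ (phiz r j - phiz j (-i)) * gcsc r m j) • (u i r * (u m j * S (u r m)))
              + ((gcsc i m j * qc ^ (phiz m (-i) - phiz j (-i)))
                  * (qc ^ (-phiz i m) * zc * thz i r m)
                  * (if r = m ∧ m < j then 1 else 0)) • (u i j * (u m r * S (u r m)))
              + ((gcsc i m j * qc ^ (phiz m (-i) - phiz j (-i)))
                  * (qc ^ (-phiz i m) * zc * thz (-i) (-r) m)
                  * (if i ≤ -j ∧ -j < r ∧ r ≤ -m then 1 else 0)) •
                  (u i (-j) * (u m (-r) * S (u r m)))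
              - ((gcsc i m j * qc ^ (phiz m (-i) - phiz j (-i)))
                  * (qc ^ (-phiz i m) * zc * thz (-i) (-r) m)
                  * (if -j ≤ i ∧ i < -m ∧ -m ≤ r then 1 else 0)) •
                  (u (-i) j * (u (-m) r * S (u r m))) := by
                rw [smul_mul_assoc, sub_mul, add_mul, add_mul]
                rw [smul_mul_assoc, smul_mul_assoc, smul_mul_assoc, smul_mul_assoc]
                rw [mul_assoc (u i r), mul_assoc (u i j), mul_assoc (u i (-j)),
                  mul_assoc (u (-i) j)]
                rw [smul_smul]
                rw [smul_sub, smul_add, smul_add]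
                rw [smul_smul, smul_smul, smul_smul, smul_smul]
                congr 1
                · congr 1
                  · congr 1
                    · congr 1
                      linear_combination ScA i r m j hi0 hr.1.1 hr.1.2
                    · congr 1
                      ring
                  · congr 1
                    ring
                · congr 1
                  ring
        -- split the double sum according to hswap
        have step5 : ∑ m ∈ (Finset.Icc i j).filter (fun m => m ≠ 0),
            ∑ r ∈ (Finset.Ioc i m).filter (fun r => r ≠ 0),
              (gcsc i m j * qc ^ (phiz m (-i) - phiz j (-i))) • (u m j * (u i r * S (u r m)))
            = (∑ m ∈ (Finset.Icc i j).filter (fun m => m ≠ 0),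
                ∑ r ∈ (Finset.Ioc i m).filter (fun r => r ≠ 0),
                  (qc ^ (phiz r j - phiz j (-i)) * gcsc r m j) •
                    (u i r * (u m j * S (u r m))))
              + (∑ m ∈ (Finset.Icc i j).filter (fun m => m ≠ 0),
                  ∑ r ∈ (Finset.Ioc i m).filter (fun r => r ≠ 0),
                    ((gcsc i m j * qc ^ (phiz m (-i) - phiz j (-i)))
                      * (qc ^ (-phiz i m) * zc * thz i r m)
                      * (if r = m ∧ m < j then 1 else 0)) •
                      (u i j * (u m r * S (u r m))))
              + (∑ m ∈ (Finset.Icc i j).filter (fun m => m ≠ 0),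
                  ∑ r ∈ (Finset.Ioc i m).filter (fun r => r ≠ 0),
                    ((gcsc i m j * qc ^ (phiz m (-i) - phiz j (-i)))
                      * (qc ^ (-phiz i m) * zc * thz (-i) (-r) m)
                      * (if i ≤ -j ∧ -j < r ∧ r ≤ -m then 1 else 0)) •
                      (u i (-j) * (u m (-r) * S (u r m))))
              - ∑ m ∈ (Finset.Icc i j).filter (fun m => m ≠ 0),
                  ∑ r ∈ (Finset.Ioc i m).filter (fun r => r ≠ 0),
                    ((gcsc i m j * qc ^ (phiz m (-i) - phiz j (-i)))
                      * (qc ^ (-phiz i m) * zc * thz (-i) (-r) m)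
                      * (if -j ≤ i ∧ i < -m ∧ -m ≤ r then 1 else 0)) •
                      (u (-i) j * (u (-m) r * S (u r m))) := by
          rw [← Finset.sum_add_distrib, ← Finset.sum_add_distrib, ← Finset.sum_sub_distrib]
          refine Finset.sum_congr rfl fun m hm => ?_
          rw [← Finset.sum_add_distrib, ← Finset.sum_add_distrib, ← Finset.sum_sub_distrib]
          exact Finset.sum_congr rfl fun r hr => hswap m hm r hr
        rw [step5]
        -- generic summation swap
        have hswapsum : ∀ (f : ℤ → ℤ → A),
            ∑ m ∈ (Finset.Icc i j).filter (fun m => m ≠ 0),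
              ∑ r ∈ (Finset.Ioc i m).filter (fun r => r ≠ 0), f m r
            = ∑ r ∈ (Finset.Ioc i j).filter (fun r => r ≠ 0),
                ∑ m ∈ (Finset.Icc r j).filter (fun m => m ≠ 0), f m r := by
          intro f
          have h1 : ∀ m ∈ (Finset.Icc i j).filter (fun m => m ≠ 0),
              ∑ r ∈ (Finset.Ioc i m).filter (fun r => r ≠ 0), f m r
              = ∑ r ∈ (Finset.Ioc i j).filter (fun r => r ≠ 0),
                  if r ≤ m then f m r else 0 := by
            intro m hm
            simp only [Finset.mem_filter, Finset.mem_Icc] at hm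
            rw [← Finset.sum_filter]
            congr 1
            ext x
            simp only [Finset.mem_filter, Finset.mem_Ioc]
            constructor
            · rintro ⟨⟨h1, h2⟩, h3⟩
              exact ⟨⟨⟨h1, le_trans h2 hm.1.2⟩, h3⟩, h2⟩
            · rintro ⟨⟨⟨h1, h2⟩, h3⟩, h4⟩
              exact ⟨⟨h1, h4⟩, h3⟩
          rw [Finset.sum_congr rfl h1, Finset.sum_comm]
          refine Finset.sum_congr rfl fun r hr => ?_
          simp only [Finset.mem_filter, Finset.mem_Ioc] at hr
          rw [← Finset.sum_filter]
          congr 1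
          ext x
          simp only [Finset.mem_filter, Finset.mem_Icc]
          constructor
          · rintro ⟨⟨⟨h1, h2⟩, h3⟩, h4⟩
            exact ⟨⟨h4, h2⟩, h3⟩
          · rintro ⟨⟨h1, h2⟩, h3⟩
            exact ⟨⟨⟨le_trans (le_of_lt hr.1.1) h1, h2⟩, h3⟩, h1⟩
        -- Y1
        have hY1 : ∑ m ∈ (Finset.Icc i j).filter (fun m => m ≠ 0),
            ∑ r ∈ (Finset.Ioc i m).filter (fun r => r ≠ 0),
              (qc ^ (phiz r j - phiz j (-i)) * gcsc r m j) • (u i r * (u m j * S (u r m)))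
            = qc ^ (phiz j j - phiz j (-i)) • u i j := by
          rw [hswapsum]
          have hinner : ∀ r ∈ (Finset.Ioc i j).filter (fun r => r ≠ 0),
              ∑ m ∈ (Finset.Icc r j).filter (fun m => m ≠ 0),
                (qc ^ (phiz r j - phiz j (-i)) * gcsc r m j) • (u i r * (u m j * S (u r m)))
              = qc ^ (phiz r j - phiz j (-i)) • (u i r * (if r = j then (1:A) else 0)) := by
            intro r hr
            simp only [Finset.mem_filter, Finset.mem_Ioc] at hr
            have hrI : inI n r := hIbet i j r hi hj (le_of_lt hr.1.1) hr.1.2 hr.2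
            have hG := ih r j hrI hj hr.1.2 (by omega)
            rw [show ∑ m ∈ (Finset.Icc r j).filter (fun m => m ≠ 0),
                (qc ^ (phiz r j - phiz j (-i)) * gcsc r m j) • (u i r * (u m j * S (u r m)))
                = ∑ m ∈ (Finset.Icc r j).filter (fun m => m ≠ 0),
                    qc ^ (phiz r j - phiz j (-i)) •
                      (u i r * (gcsc r m j • (u m j * S (u r m)))) from
              Finset.sum_congr rfl fun m hm => by rw [mul_smul, mul_smul_comm]]
            rw [← Finset.smul_sum, ← Finset.mul_sum, hG]
          rw [Finset.sum_congr rfl hinner]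
          rw [Finset.sum_eq_single_of_mem j (by
            simp only [Finset.mem_filter, Finset.mem_Ioc]
            omega)]
          · rw [if_pos rfl, mul_one]
          · intro r hr hne
            rw [if_neg hne, mul_zero, smul_zero]
        -- Y2
        have hY2 : ∑ m ∈ (Finset.Icc i j).filter (fun m => m ≠ 0),
            ∑ r ∈ (Finset.Ioc i m).filter (fun r => r ≠ 0),
              ((gcsc i m j * qc ^ (phiz m (-i) - phiz j (-i)))
                * (qc ^ (-phiz i m) * zc * thz i r m)
                * (if r = m ∧ m < j then 1 else 0)) • (u i j * (u m r * S (u r m)))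
            = (zc * qc ^ (-phiz j (-i)) *
                ∑ m ∈ (Finset.Ioo i j).filter (fun m => m ≠ 0),
                  ((-1 : Kq)) ^ (pz i * pz m + pz m * pz j + pz i * pz j) *
                    qc ^ (2 * |j| - 2 * |m|)) • u i j := by
          have hper : ∀ m ∈ (Finset.Icc i j).filter (fun m => m ≠ 0),
              ∑ r ∈ (Finset.Ioc i m).filter (fun r => r ≠ 0),
                ((gcsc i m j * qc ^ (phiz m (-i) - phiz j (-i)))
                  * (qc ^ (-phiz i m) * zc * thz i r m)
                  * (if r = m ∧ m < j then 1 else 0)) • (u i j * (u m r * S (u r m)))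
              = if i < m ∧ m < j then
                  (zc * qc ^ (-phiz j (-i)) *
                    (((-1 : Kq)) ^ (pz i * pz m + pz m * pz j + pz i * pz j) *
                      qc ^ (2 * |j| - 2 * |m|))) • u i j
                else 0 := by
            intro m hm
            simp only [Finset.mem_filter, Finset.mem_Icc] at hm
            have hmI : inI n m := hIbet i j m hi hj hm.1.1 hm.1.2 hm.2
            by_cases hc : i < m ∧ m < j
            · rw [if_pos hc]
              rw [Finset.sum_eq_single_of_mem m (by
                simp only [Finset.mem_filter, Finset.mem_Ioc]
                exact ⟨⟨hc.1, le_rfl⟩, hm.2⟩)]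
              · rw [if_pos ⟨rfl, hc.2⟩, mul_one, hdiag2 m hmI, mul_one]
                congr 1
                linear_combination ScB i m j hi0 hc.1
              · intro r hr hne
                rw [if_neg (fun hcon => hne hcon.1), mul_zero, zero_smul]
            · rw [if_neg hc]
              refine Finset.sum_eq_zero fun r hr => ?_
              simp only [Finset.mem_filter, Finset.mem_Ioc] at hr
              rw [if_neg (fun hcon => hc (by
                obtain ⟨h1, h2⟩ := hcon
                constructor <;> omega)), mul_zero, zero_smul]
          rw [Finset.sum_congr rfl hper, ← Finset.sum_filter]
          rw [show ((Finset.Icc i j).filter (fun m => m ≠ 0)).filter (fun m => i < m ∧ m < j)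
              = (Finset.Ioo i j).filter (fun m => m ≠ 0) from by
            ext x
            simp only [Finset.mem_filter, Finset.mem_Icc, Finset.mem_Ioo]
            omega]
          rw [Finset.mul_sum, ← Finset.sum_smul]
        -- Y3
        have hY3 : ∑ m ∈ (Finset.Icc i j).filter (fun m => m ≠ 0),
            ∑ r ∈ (Finset.Ioc i m).filter (fun r => r ≠ 0),
              ((gcsc i m j * qc ^ (phiz m (-i) - phiz j (-i)))
                * (qc ^ (-phiz i m) * zc * thz (-i) (-r) m)
                * (if i ≤ -j ∧ -j < r ∧ r ≤ -m then 1 else 0)) •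
                (u i (-j) * (u m (-r) * S (u r m)))
            = 0 := by
          rw [hswapsum]
          refine Finset.sum_eq_zero fun r hr => ?_
          simp only [Finset.mem_filter, Finset.mem_Ioc] at hr
          by_cases hc : i ≤ -j ∧ -j < r ∧ r < 0
          · have hrI : inI n r := hIbet i j r hi hj (le_of_lt hr.1.1) hr.1.2 hr.2
            have hrnI : inI n (-r) := hIneg r hrI
            have hper : ∀ m ∈ (Finset.Icc r j).filter (fun m => m ≠ 0),
                ((gcsc i m j * qc ^ (phiz m (-i) - phiz j (-i)))
                  * (qc ^ (-phiz i m) * zc * thz (-i) (-r) m)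
                  * (if i ≤ -j ∧ -j < r ∧ r ≤ -m then 1 else 0)) •
                  (u i (-j) * (u m (-r) * S (u r m)))
                = if r ≤ -m then
                    (zc * qc ^ (-phiz j (-i) + (2 * |j| + 2 * r))) •
                      (u i (-j) * (gcsc r m (-r) • (u m (-r) * S (u r m))))
                  else 0 := by
              intro m hm
              simp only [Finset.mem_filter, Finset.mem_Icc] at hm
              by_cases hm3 : r ≤ -m
              · rw [if_pos ⟨hc.1, hc.2.1, hm3⟩, if_pos hm3, mul_one]
                rw [show ((gcsc i m j * qc ^ (phiz m (-i) - phiz j (-i)))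
                    * (qc ^ (-phiz i m) * zc * thz (-i) (-r) m))
                    = (zc * qc ^ (-phiz j (-i) + (2 * |j| + 2 * r))) * gcsc r m (-r) from by
                  linear_combination ScC i r m j hr.1.1 hm.1.1 hm.1.2 hc.1 hc.2.1 hm3 hm.2 hr.2]
                rw [mul_smul, mul_smul_comm]
              · rw [if_neg (fun hcon => hm3 hcon.2.2), mul_zero, zero_smul, if_neg hm3]
            rw [Finset.sum_congr rfl hper, ← Finset.sum_filter]
            rw [show (((Finset.Icc r j).filter (fun m => m ≠ 0)).filter (fun m => r ≤ -m))
                = (Finset.Icc r (-r)).filter (fun m => m ≠ 0) from by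
              ext x
              simp only [Finset.mem_filter, Finset.mem_Icc]
              constructor
              · rintro ⟨⟨⟨h1, h2⟩, h3⟩, h4⟩
                exact ⟨⟨h1, by omega⟩, h3⟩
              · rintro ⟨⟨h1, h2⟩, h3⟩
                have h5 : -r < j := by omega
                exact ⟨⟨⟨h1, by omega⟩, h3⟩, by omega⟩]
            rw [← Finset.smul_sum, ← Finset.mul_sum]
            rw [ih r (-r) hrI hrnI (by omega) (by omega)]
            rw [if_neg (by omega : ¬ r = -r), mul_zero, smul_zero]
          · refine Finset.sum_eq_zero fun m hm => ?_
            simp only [Finset.mem_filter, Finset.mem_Icc] at hm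
            rw [if_neg (fun hcon => hc ⟨hcon.1, hcon.2.1, by
              have := hcon.2.2
              omega⟩), mul_zero, zero_smul]
        -- Y4
        have hY4 : ∑ m ∈ (Finset.Icc i j).filter (fun m => m ≠ 0),
            ∑ r ∈ (Finset.Ioc i m).filter (fun r => r ≠ 0),
              ((gcsc i m j * qc ^ (phiz m (-i) - phiz j (-i)))
                * (qc ^ (-phiz i m) * zc * thz (-i) (-r) m)
                * (if -j ≤ i ∧ i < -m ∧ -m ≤ r then 1 else 0)) •
                (u (-i) j * (u (-m) r * S (u r m)))
            = 0 := by
          refine Finset.sum_eq_zero fun m hm => ?_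
          simp only [Finset.mem_filter, Finset.mem_Icc] at hm
          have hmI : inI n m := hIbet i j m hi hj hm.1.1 hm.1.2 hm.2
          by_cases hc : -j ≤ i ∧ i < -m ∧ 0 < m
          · have hper : ∀ r ∈ (Finset.Ioc i m).filter (fun r => r ≠ 0),
                ((gcsc i m j * qc ^ (phiz m (-i) - phiz j (-i)))
                  * (qc ^ (-phiz i m) * zc * thz (-i) (-r) m)
                  * (if -j ≤ i ∧ i < -m ∧ -m ≤ r then 1 else 0)) •
                  (u (-i) j * (u (-m) r * S (u r m)))
                = if -m ≤ r then
                    ((gcsc i m j * qc ^ (phiz m (-i) - phiz j (-i)))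
                      * (qc ^ (-phiz i m) * zc)) •
                      (u (-i) j * (u (-m) r * S (u r m)))
                  else 0 := by
              intro r hr
              simp only [Finset.mem_filter, Finset.mem_Ioc] at hr
              by_cases hr4 : -m ≤ r
              · rw [if_pos ⟨hc.1, hc.2.1, hr4⟩, if_pos hr4, mul_one,
                  thz_one (-i) (-r) m (by omega) (Or.inr (by omega)), mul_one]
              · rw [if_neg (fun hcon => hr4 hcon.2.2), mul_zero, zero_smul, if_neg hr4]
            rw [Finset.sum_congr rfl hper, ← Finset.sum_filter]
            rw [show (((Finset.Ioc i m).filter (fun r => r ≠ 0)).filter (fun r => -m ≤ r))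
                = (Finset.Icc (-m) m).filter (fun r => r ≠ 0) from by
              ext x
              simp only [Finset.mem_filter, Finset.mem_Ioc, Finset.mem_Icc]
              constructor
              · rintro ⟨⟨⟨h1, h2⟩, h3⟩, h4⟩
                exact ⟨⟨h4, h2⟩, h3⟩
              · rintro ⟨⟨h1, h2⟩, h3⟩
                exact ⟨⟨⟨by omega, h2⟩, h3⟩, h1⟩]
            rw [← Finset.smul_sum, ← Finset.mul_sum]
            rw [hantipode2 (-m) m (hIneg m hmI) hmI (by omega)]
            rw [if_neg (by omega : ¬ -m = m), mul_zero, smul_zero]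
          · refine Finset.sum_eq_zero fun r hr => ?_
            simp only [Finset.mem_filter, Finset.mem_Ioc] at hr
            rw [if_neg (fun hcon => hc ⟨hcon.1, hcon.2.1, by
              have := hcon.2.2
              omega⟩), mul_zero, zero_smul]
        rw [hY1, hY2, hY3, hY4]
        rw [sub_zero, add_zero]
        rw [show qc ^ (phiz j j - phiz j (-i)) • u i j
              + (zc * qc ^ (-phiz j (-i)) *
                  ∑ m ∈ (Finset.Ioo i j).filter (fun m => m ≠ 0),
                    ((-1 : Kq)) ^ (pz i * pz m + pz m * pz j + pz i * pz j) *
                      qc ^ (2 * |j| - 2 * |m|)) • u i j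
            = (qc ^ (phiz j j - phiz j (-i))
                + zc * qc ^ (-phiz j (-i)) *
                    ∑ m ∈ (Finset.Ioo i j).filter (fun m => m ≠ 0),
                      ((-1 : Kq)) ^ (pz i * pz m + pz m * pz j + pz i * pz j) *
                        qc ^ (2 * |j| - 2 * |m|)) • u i j from by rw [add_smul]]
        rw [← sub_smul]
        rw [show gcsc i i j * qc ^ (phiz i (-i) - phiz j (-i))
              - (qc ^ (phiz j j - phiz j (-i))
                + zc * qc ^ (-phiz j (-i)) *
                    ∑ m ∈ (Finset.Ioo i j).filter (fun m => m ≠ 0),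
                      ((-1 : Kq)) ^ (pz i * pz m + pz m * pz j + pz i * pz j) *
                        qc ^ (2 * |j| - 2 * |m|))
            = gcsc i i j * qc ^ (phiz i (-i) - phiz j (-i))
              - qc ^ (phiz j j - phiz j (-i))
              - zc * qc ^ (-phiz j (-i)) *
                  ∑ m ∈ (Finset.Ioo i j).filter (fun m => m ≠ 0),
                    ((-1 : Kq)) ^ (pz i * pz m + pz m * pz j + pz i * pz j) *
                      qc ^ (2 * |j| - 2 * |m|) from by ring]
        rw [key_scalar i j hi0 hj0 hlt, zero_smul, mul_zero, if_neg hij']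
  -- S² on generators
  have hstep : ∀ i j : ℤ, inI n i → inI n j → i ≤ j →
      (∀ m, i < m → m ≤ j → m ≠ 0 → S (S (u m j)) = (qc ^ (2*|j| - 2*|m|)) • u m j) →
      S (S (u i j)) = (qc ^ (2*|j| - 2*|i|)) • u i j := by
    intro i j hi hj hij IH
    have h := congrArg S (hantipode2 i j hi hj hij)
    rw [map_sum, apply_ite S, hS1, map_zero] at h
    have hterm : ∀ m ∈ (Finset.Icc i j).filter (fun m => m ≠ 0),
        S (u i m * S (u m j))
        = ((-1:Kq) ^ ((pz i + pz m) * (pz m + pz j))) • (S (S (u m j)) * S (u i m)) := by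
      intro m hm
      simp only [Finset.mem_filter, Finset.mem_Icc] at hm
      have hmI : inI n m := hIbet i j m hi hj hm.1.1 hm.1.2 hm.2
      rw [hSanti _ _ _ _ (hu i m hi hmI hm.1.1) (hSgr _ _ (hu m j hmI hj hm.1.2))]
      rw [zmodval]
    rw [Finset.sum_congr rfl hterm] at h
    -- replace S² by its value for m ≠ i
    have hsplit : (Finset.Icc i j).filter (fun r => r ≠ 0)
        = insert i ((Finset.Ioc i j).filter (fun r => r ≠ 0)) := by
      ext x
      have := hi.1
      simp only [Finset.mem_filter, Finset.mem_Icc, Finset.mem_Ioc, Finset.mem_insert]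
      omega
    have hnotmem : i ∉ (Finset.Ioc i j).filter (fun r => r ≠ 0) := by
      simp only [Finset.mem_filter, Finset.mem_Ioc]
      omega
    rw [hsplit, Finset.sum_insert hnotmem] at h
    have hG := hG1 (j - i).toNat i j hi hj hij le_rfl
    rw [hsplit, Finset.sum_insert hnotmem] at hG
    have hsame : ∀ m ∈ (Finset.Ioc i j).filter (fun r => r ≠ 0),
        ((-1:Kq) ^ ((pz i + pz m) * (pz m + pz j))) • (S (S (u m j)) * S (u i m))
        = gcsc i m j • (u m j * S (u i m)) := by
      intro m hm
      simp only [Finset.mem_filter, Finset.mem_Ioc] at hm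
      rw [IH m hm.1.1 hm.1.2 hm.2, smul_mul_assoc, smul_smul]
      rfl
    rw [Finset.sum_congr rfl hsame] at h
    -- subtract
    have hEq : ((-1:Kq) ^ ((pz i + pz i) * (pz i + pz j))) • (S (S (u i j)) * S (u i i))
        = gcsc i i j • (u i j * S (u i i)) := by
      have := h.trans hG.symm
      exact add_right_cancel this
    rw [neg_one_pow_even (a := (pz i + pz i) * (pz i + pz j)) (by
      have : (pz i + pz i) * (pz i + pz j) = 2 * (pz i * (pz i + pz j)) := by ring
      omega), one_smul] at hEq
    have hg : gcsc i i j = qc ^ (2 * |j| - 2 * |i|) := by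
      unfold gcsc
      rw [neg_one_pow_even (by
        have : (pz i + pz i) * (pz i + pz j) = 2 * (pz i * (pz i + pz j)) := by ring
        omega), one_mul]
    rw [hg] at hEq
    have h3 := congrArg (fun x => x * u i i) hEq
    simp only [smul_mul_assoc] at h3
    rw [mul_assoc, mul_assoc, hdiag1 i hi, mul_one, mul_one] at h3
    exact h3
  have hS2 : ∀ i j : ℤ, inI n i → inI n j → i ≤ j →
      S (S (u i j)) = (qc ^ (2 * |j| - 2 * |i|)) • u i j := by
    have hmain : ∀ N : ℕ, ∀ i j : ℤ, inI n i → inI n j → i ≤ j → (j - i).toNat ≤ N →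
        S (S (u i j)) = (qc ^ (2 * |j| - 2 * |i|)) • u i j := by
      intro N
      induction N with
      | zero =>
        intro i j hi hj hij hN
        exact hstep i j hi hj hij (fun m h1 h2 _ => by omega)
      | succ N ih =>
        intro i j hi hj hij hN
        refine hstep i j hi hj hij (fun m h1 h2 hm0 => ?_)
        have hmI : inI n m := hIbet i j m hi hj (le_of_lt h1) h2 hm0
        exact ih m j hmI hj h2 (by omega)
    exact fun i j hi hj hij => hmain (j - i).toNat i j hi hj hij le_rfl
  refine ⟨hS2, ?_⟩
  -- Part 2: invertibility of S
  set Gset : Set A := {w : A | ∃ i j : ℤ, inI n i ∧ inI n j ∧ i ≤ j ∧ w = u i j} with hGset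
  have hEV : ∀ v ∈ Submonoid.closure Gset,
      (∃ r : ZMod 2, v ∈ 𝒜 r) ∧ ∃ c : Kq, c ≠ 0 ∧ S (S v) = c • v := by
    intro v hv
    induction hv using Submonoid.closure_induction with
    | mem x hx =>
      obtain ⟨i, j, hi, hj, hij, rfl⟩ := hx
      refine ⟨⟨_, hu i j hi hj hij⟩, qc ^ (2 * |j| - 2 * |i|), zpow_ne_zero _ qne, hS2 i j hi hj hij⟩
    | one =>
      exact ⟨⟨0, SetLike.one_mem_graded 𝒜⟩, 1, one_ne_zero, by rw [hS1, hS1, one_smul]⟩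
    | mul x y hx hy ihx ihy =>
      obtain ⟨⟨r, hr⟩, c, hc, hSx⟩ := ihx
      obtain ⟨⟨s, hs⟩, d, hd, hSy⟩ := ihy
      refine ⟨⟨r + s, SetLike.mul_mem_graded hr hs⟩, c * d, mul_ne_zero hc hd, ?_⟩
      rw [hSanti r s x y hr hs, map_smul, hSanti s r (S y) (S x) (hSgr s y hs) (hSgr r x hr),
        smul_smul, hSx, hSy]
      rw [show ((-1:Kq) ^ (r.val * s.val) * (-1:Kq) ^ (s.val * r.val)) = 1 from by
        rw [← pow_add]
        refine neg_one_pow_even ?_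
        have h : r.val * s.val + s.val * r.val = 2 * (r.val * s.val) := by ring
        omega]
      rw [one_smul, smul_mul_smul_comm]
  have hspan : Submodule.span Kq ((Submonoid.closure Gset : Submonoid A) : Set A) = ⊤ := by
    rw [← Algebra.adjoin_eq_span, hGset]
    rw [hgen]
    rfl
  obtain ⟨bs, hbsub, hbspan, hbli⟩ :=
    exists_linearIndependent Kq ((Submonoid.closure Gset : Submonoid A) : Set A)
  have hbtop : ⊤ ≤ Submodule.span Kq (Set.range ((↑) : bs → A)) := by
    rw [Subtype.range_coe_subtype]
    rw [show {x | x ∈ bs} = bs from rfl, hbspan, hspan]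
  let BB : Module.Basis bs Kq A := Module.Basis.mk hbli hbtop
  have hBBapp : ∀ k : bs, BB k = (k : A) := fun k => Module.Basis.mk_apply hbli hbtop k
  let cf : bs → Kq := fun k => (hEV (k : A) (hbsub k.2)).2.choose
  have hcf : ∀ k : bs, cf k ≠ 0 ∧ S (S (k : A)) = cf k • (k : A) :=
    fun k => (hEV (k : A) (hbsub k.2)).2.choose_spec
  let g : A →ₗ[Kq] A := BB.constr Kq (fun k => (cf k)⁻¹ • (k : A))
  have hgk : ∀ k : bs, g (k : A) = (cf k)⁻¹ • (k : A) := by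
    intro k
    have h := BB.constr_basis Kq (fun k : bs => (cf k)⁻¹ • (k : A)) k
    rwa [hBBapp] at h
  have hg1 : ∀ x : A, S (S (g x)) = x := by
    have hh : (S.comp S).comp g = LinearMap.id := by
      refine BB.ext fun k => ?_
      rw [LinearMap.comp_apply, LinearMap.comp_apply, LinearMap.id_apply, hBBapp, hgk,
        map_smul, map_smul, (hcf k).2, smul_smul, inv_mul_cancel₀ (hcf k).1, one_smul]
    intro x
    exact LinearMap.congr_fun hh x
  have hg2 : ∀ x : A, g (S (S x)) = x := by
    have hh : g.comp (S.comp S) = LinearMap.id := by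
      refine BB.ext fun k => ?_
      rw [LinearMap.comp_apply, LinearMap.comp_apply, LinearMap.id_apply, hBBapp, (hcf k).2,
        map_smul, hgk, smul_smul, mul_inv_cancel₀ (hcf k).1, one_smul]
    intro x
    exact LinearMap.congr_fun hh x
  have hSbij : Function.Bijective S := by
    constructor
    · intro a b hab
      have : S (S a) = S (S b) := by rw [hab]
      calc a = g (S (S a)) := (hg2 a).symm
        _ = g (S (S b)) := by rw [this]
        _ = b := hg2 b
    · intro y
      exact ⟨S (g y), hg1 y⟩
  let e : A ≃ₗ[Kq] A := LinearEquiv.ofBijective S hSbij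
  have heapp : ∀ x, e x = S x := fun x => rfl
  refine ⟨e.symm.toLinearMap, ?_, ?_, ?_⟩
  · refine LinearMap.ext fun x => ?_
    simp only [LinearMap.comp_apply, LinearMap.id_apply, LinearEquiv.coe_coe]
    rw [← heapp, LinearEquiv.symm_apply_apply]
  · refine LinearMap.ext fun x => ?_
    simp only [LinearMap.comp_apply, LinearMap.id_apply, LinearEquiv.coe_coe]
    rw [show S (e.symm x) = e (e.symm x) from rfl, LinearEquiv.apply_symm_apply]
  · intro i j hi hj hij
    have : e ((qc ^ (2 * |i| - 2 * |j|)) • S (u i j)) = u i j := by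
      rw [heapp, map_smul, hS2 i j hi hj hij, smul_smul, qmul,
        show 2 * |i| - 2 * |j| + (2 * |j| - 2 * |i|) = 0 by ring, zpow_zero, one_smul]
    simp only [LinearEquiv.coe_coe]
    rw [LinearEquiv.symm_apply_eq]
    exact this.symm
end

section
/- Let AHC_r(z) be the affine Hecke–Clifford superalgebra with even generators t_1,...,t_{r-1} and odd generators c_1,...,c_r, ϖ_1,...,ϖ_r. Then there is a superalgebra automorphism of AHC_r(z) given by c_i ↦ ϖ_i, ϖ_i ↦ c_i, t_j ↦ -t_j^{-1}. -/
/-- Generators of the affine Hecke–Clifford superalgebra `AHC_r(z)`: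
even generators `t_1,…,t_{r-1}` (with `t i` denoting `t_{i+1}` for `i : Fin (r-1)`)
and odd generators `c_1,…,c_r` and `ϖ_1,…,ϖ_r`. -/
inductive AHCGen (r : ℕ) : Type
  | t : Fin (r - 1) → AHCGen r
  | c : Fin r → AHCGen r
  | w : Fin r → AHCGen r

/-- The index `i` viewed in `Fin r`. -/
def finLo {r : ℕ} (i : Fin (r - 1)) : Fin r := ⟨i.val, by have := i.isLt; omega⟩

/-- The index `i+1` viewed in `Fin r`. -/
def finHi {r : ℕ} (i : Fin (r - 1)) : Fin r := ⟨i.val + 1, by have := i.isLt; omega⟩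

/-- The generator `x` as an element of the free algebra. -/
def G (k : Type*) [CommRing k] {r : ℕ} (x : AHCGen r) : FreeAlgebra k (AHCGen r) :=
  FreeAlgebra.ι k x

/-- The defining relations of the affine Hecke–Clifford superalgebra `AHC_r(z)`:
`t_i² = z t_i + 1`; `c_i² = -1`, `c_i c_j = -c_j c_i` (i ≠ j); `ϖ_i² = -1`,
`ϖ_i ϖ_j = -ϖ_j ϖ_i` (i ≠ j); `t_i c_i = c_{i+1} t_i`, `t_i c_j = c_j t_i` (j ≠ i, i+1);
`t_i ϖ_{i+1} = ϖ_i t_i`, `t_i ϖ_j = ϖ_j t_i` (j ≠ i, i+1); and no relation between the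
`c`'s and the `ϖ`'s. -/
inductive AHCRel (k : Type*) [CommRing k] (z : k) (r : ℕ) :
    FreeAlgebra k (AHCGen r) → FreeAlgebra k (AHCGen r) → Prop
  | t_sq (i : Fin (r - 1)) :
      AHCRel k z r (G k (.t i) * G k (.t i)) (z • G k (.t i) + 1)
  | c_sq (i : Fin r) : AHCRel k z r (G k (.c i) * G k (.c i)) (-1)
  | c_anti (i j : Fin r) (h : i ≠ j) :
      AHCRel k z r (G k (.c i) * G k (.c j)) (-(G k (.c j) * G k (.c i)))
  | w_sq (i : Fin r) : AHCRel k z r (G k (.w i) * G k (.w i)) (-1)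
  | w_anti (i j : Fin r) (h : i ≠ j) :
      AHCRel k z r (G k (.w i) * G k (.w j)) (-(G k (.w j) * G k (.w i)))
  | t_c (i : Fin (r - 1)) :
      AHCRel k z r (G k (.t i) * G k (.c (finLo i))) (G k (.c (finHi i)) * G k (.t i))
  | t_c_far (i : Fin (r - 1)) (j : Fin r) (h1 : j ≠ finLo i) (h2 : j ≠ finHi i) :
      AHCRel k z r (G k (.t i) * G k (.c j)) (G k (.c j) * G k (.t i))
  | t_w (i : Fin (r - 1)) :
      AHCRel k z r (G k (.t i) * G k (.w (finHi i))) (G k (.w (finLo i)) * G k (.t i))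
  | t_w_far (i : Fin (r - 1)) (j : Fin r) (h1 : j ≠ finLo i) (h2 : j ≠ finHi i) :
      AHCRel k z r (G k (.t i) * G k (.w j)) (G k (.w j) * G k (.t i))

/-- The affine Hecke–Clifford superalgebra `AHC_r(z)`. -/
abbrev AHCalg (k : Type*) [CommRing k] (z : k) (r : ℕ) := RingQuot (AHCRel k z r)

/-- The generator `x` as an element of `AHC_r(z)`. -/
def ahcg (k : Type*) [CommRing k] (z : k) {r : ℕ} (x : AHCGen r) : AHCalg k z r :=
  RingQuot.mkAlgHom k (AHCRel k z r) (G k x)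


namespace AHC13

section Generic
variable {k : Type*} [CommRing k] (z : k) {A : Type*} [Ring A] [Algebra k A]

lemma gtinv (a : A) (h : a * a = z • a + 1) : a * (a - algebraMap k A z) = 1 := by
  have hc : a * algebraMap k A z = algebraMap k A z * a := (Algebra.commutes z a).symm
  rw [mul_sub, h, Algebra.smul_def, hc]
  abel

lemma gtinv' (a : A) (h : a * a = z • a + 1) : (a - algebraMap k A z) * a = 1 := by
  rw [sub_mul, h, Algebra.smul_def]
  abel

lemma gkey (a : A) (h : a * a = z • a + 1) :
    (-(a - algebraMap k A z)) * (-(a - algebraMap k A z)) =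
      z • (-(a - algebraMap k A z)) + 1 := by
  have hc : a * algebraMap k A z = algebraMap k A z * a := (Algebra.commutes z a).symm
  rw [neg_mul_neg, sub_mul, mul_sub, mul_sub, h, Algebra.smul_def, Algebra.smul_def,
    mul_neg, mul_sub, hc]
  abel

lemma gnegconj {a x y : A} (h : a * x = y * a) : (-a) * x = y * (-a) := by
  rw [neg_mul, h, mul_neg]

lemma gconj_far {a x : A} (h : a * x = x * a) :
    (a - algebraMap k A z) * x = x * (a - algebraMap k A z) := by
  rw [sub_mul, mul_sub, h, Algebra.commutes]

lemma gconj_w {a x y : A} (ht : a * a = z • a + 1) (h : a * y = x * a) :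
    (a - algebraMap k A z) * x = y * (a - algebraMap k A z) := by
  have h1 : y = (a - algebraMap k A z) * x * a := by
    calc y = ((a - algebraMap k A z) * a) * y := by rw [gtinv' z a ht, one_mul]
      _ = (a - algebraMap k A z) * (a * y) := by rw [mul_assoc]
      _ = (a - algebraMap k A z) * (x * a) := by rw [h]
      _ = (a - algebraMap k A z) * x * a := by rw [mul_assoc]
  rw [h1, mul_assoc, mul_assoc, gtinv z a ht, mul_one]

lemma gconj_c {a x y : A} (ht : a * a = z • a + 1) (h : a * x = y * a) :
    (a - algebraMap k A z) * y = x * (a - algebraMap k A z) := by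
  have h1 : y = a * x * (a - algebraMap k A z) := by
    calc y = y * (a * (a - algebraMap k A z)) := by rw [gtinv z a ht, mul_one]
      _ = (y * a) * (a - algebraMap k A z) := by rw [mul_assoc]
      _ = (a * x) * (a - algebraMap k A z) := by rw [h]
  rw [h1, ← mul_assoc, ← mul_assoc, gtinv' z a ht, one_mul]

end Generic

variable (k : Type*) [CommRing k] (z : k) (r : ℕ)

/-- Image of the generators under the automorphism. -/
noncomputable def tgt : AHCGen r → AHCalg k z r
  | .t j => -(ahcg k z (.t j) - algebraMap k (AHCalg k z r) z)
  | .c i => ahcg k z (.w i)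
  | .w i => ahcg k z (.c i)

noncomputable def L : FreeAlgebra k (AHCGen r) →ₐ[k] AHCalg k z r :=
  FreeAlgebra.lift k (tgt k z r)

lemma mk_rel {a b : FreeAlgebra k (AHCGen r)} (h : AHCRel k z r a b) :
    RingQuot.mkAlgHom k (AHCRel k z r) a = RingQuot.mkAlgHom k (AHCRel k z r) b :=
  RingQuot.mkAlgHom_rel k h

lemma Tsq (j : Fin (r - 1)) :
    ahcg k z (.t j) * ahcg k z (.t j) = z • ahcg k z (.t j) + 1 := by
  simpa [ahcg, map_mul, map_add, map_smul, map_one] using mk_rel k z r (AHCRel.t_sq j)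

lemma Csq (i : Fin r) : ahcg k z (.c i) * ahcg k z (.c i) = -1 := by
  simpa [ahcg, map_mul, map_neg, map_one] using mk_rel k z r (AHCRel.c_sq i)

lemma Canti (i j : Fin r) (h : i ≠ j) :
    ahcg k z (.c i) * ahcg k z (.c j) = -(ahcg k z (.c j) * ahcg k z (.c i)) := by
  simpa [ahcg, map_mul, map_neg] using mk_rel k z r (AHCRel.c_anti i j h)

lemma Wsq (i : Fin r) : ahcg k z (.w i) * ahcg k z (.w i) = -1 := by
  simpa [ahcg, map_mul, map_neg, map_one] using mk_rel k z r (AHCRel.w_sq i)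

lemma Wanti (i j : Fin r) (h : i ≠ j) :
    ahcg k z (.w i) * ahcg k z (.w j) = -(ahcg k z (.w j) * ahcg k z (.w i)) := by
  simpa [ahcg, map_mul, map_neg] using mk_rel k z r (AHCRel.w_anti i j h)

lemma TC (i : Fin (r - 1)) :
    ahcg k z (.t i) * ahcg k z (.c (finLo i)) = ahcg k z (.c (finHi i)) * ahcg k z (.t i) := by
  simpa [ahcg, map_mul] using mk_rel k z r (AHCRel.t_c i)

lemma TCfar (i : Fin (r - 1)) (j : Fin r) (h1 : j ≠ finLo i) (h2 : j ≠ finHi i) :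
    ahcg k z (.t i) * ahcg k z (.c j) = ahcg k z (.c j) * ahcg k z (.t i) := by
  simpa [ahcg, map_mul] using mk_rel k z r (AHCRel.t_c_far i j h1 h2)

lemma TW (i : Fin (r - 1)) :
    ahcg k z (.t i) * ahcg k z (.w (finHi i)) = ahcg k z (.w (finLo i)) * ahcg k z (.t i) := by
  simpa [ahcg, map_mul] using mk_rel k z r (AHCRel.t_w i)

lemma TWfar (i : Fin (r - 1)) (j : Fin r) (h1 : j ≠ finLo i) (h2 : j ≠ finHi i) :
    ahcg k z (.t i) * ahcg k z (.w j) = ahcg k z (.w j) * ahcg k z (.t i) := by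
  simpa [ahcg, map_mul] using mk_rel k z r (AHCRel.t_w_far i j h1 h2)

lemma rel_pres : ∀ ⦃a b : FreeAlgebra k (AHCGen r)⦄, AHCRel k z r a b →
    L k z r a = L k z r b := by
  intro a b h
  induction h with
  | t_sq i =>
      simp only [G, L, map_mul, map_add, map_smul, map_one, FreeAlgebra.lift_ι_apply, tgt]
      exact gkey z _ (Tsq k z r i)
  | c_sq i =>
      simp only [G, L, map_mul, map_neg, map_one, FreeAlgebra.lift_ι_apply, tgt]
      exact Wsq k z r i
  | c_anti i j h =>
      simp only [G, L, map_mul, map_neg, FreeAlgebra.lift_ι_apply, tgt]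
      exact Wanti k z r i j h
  | w_sq i =>
      simp only [G, L, map_mul, map_neg, map_one, FreeAlgebra.lift_ι_apply, tgt]
      exact Csq k z r i
  | w_anti i j h =>
      simp only [G, L, map_mul, map_neg, FreeAlgebra.lift_ι_apply, tgt]
      exact Canti k z r i j h
  | t_c i =>
      simp only [G, L, map_mul, FreeAlgebra.lift_ι_apply, tgt]
      exact gnegconj (gconj_w z (Tsq k z r i) (TW k z r i))
  | t_c_far i j h1 h2 =>
      simp only [G, L, map_mul, FreeAlgebra.lift_ι_apply, tgt]
      exact gnegconj (gconj_far z (TWfar k z r i j h1 h2))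
  | t_w i =>
      simp only [G, L, map_mul, FreeAlgebra.lift_ι_apply, tgt]
      exact gnegconj (gconj_c z (Tsq k z r i) (TC k z r i))
  | t_w_far i j h1 h2 =>
      simp only [G, L, map_mul, FreeAlgebra.lift_ι_apply, tgt]
      exact gnegconj (gconj_far z (TCfar k z r i j h1 h2))

noncomputable def F : AHCalg k z r →ₐ[k] AHCalg k z r :=
  RingQuot.liftAlgHom k ⟨L k z r, rel_pres k z r⟩

lemma F_ahcg (x : AHCGen r) : F k z r (ahcg k z x) = tgt k z r x := by
  rw [ahcg, F, RingQuot.liftAlgHom_mkAlgHom_apply, L, G, FreeAlgebra.lift_ι_apply]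

lemma FF : (F k z r).comp (F k z r) = AlgHom.id k (AHCalg k z r) := by
  apply RingQuot.ringQuot_ext'
  apply FreeAlgebra.hom_ext
  funext x
  show (F k z r) ((F k z r) (RingQuot.mkAlgHom k (AHCRel k z r) (FreeAlgebra.ι k x))) =
    RingQuot.mkAlgHom k (AHCRel k z r) (FreeAlgebra.ι k x)
  show (F k z r) ((F k z r) (ahcg k z x)) = ahcg k z x
  cases x with
  | t j =>
      rw [F_ahcg]
      simp only [tgt, map_neg, map_sub, F_ahcg, AlgHom.commutes]
      abel
  | c i => rw [F_ahcg]; rw [show tgt k z r (.c i) = ahcg k z (.w i) from rfl, F_ahcg]; rfl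
  | w i => rw [F_ahcg]; rw [show tgt k z r (.w i) = ahcg k z (.c i) from rfl, F_ahcg]; rfl

end AHC13

/-- There is a superalgebra automorphism of `AHC_r(z)` sending `c_i ↦ ϖ_i`, `ϖ_i ↦ c_i`
and `t_j ↦ -t_j⁻¹`.  (Recall `t_j⁻¹ = t_j - z`, so `-t_j⁻¹ = -(t_j - z)`.) -/
theorem stmt13 (k : Type*) [CommRing k] (hk : ringChar k ≠ 2) (z : k) (r : ℕ) :
    ∃ f : AHCalg k z r ≃ₐ[k] AHCalg k z r,
      (∀ i : Fin r, f (ahcg k z (.c i)) = ahcg k z (.w i)) ∧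
      (∀ i : Fin r, f (ahcg k z (.w i)) = ahcg k z (.c i)) ∧
      (∀ j : Fin (r - 1),
        f (ahcg k z (.t j)) = -(ahcg k z (.t j) - algebraMap k (AHCalg k z r) z)) := by
  refine ⟨AlgEquiv.ofAlgHom (AHC13.F k z r) (AHC13.F k z r) (AHC13.FF k z r) (AHC13.FF k z r),
    fun i => ?_, fun i => ?_, fun j => ?_⟩ <;>
  (change AHC13.F k z r _ = _; simp [AlgEquiv.ofAlgHom, AHC13.F_ahcg, AHC13.tgt])
end

section
/- In the affine Hecke–Clifford superalgebra AHC_r(z), the elements x_i := c_i ϖ_i (1 ≤ i ≤ r) are even, pairwise commuting, invertible with x_i^{-1} = ϖ_i c_i, and satisfy c_i x_i = x_i^{-1} c_i, t_i x_i = x_{i+1} t_i - z(x_{i+1} - c_i c_{i+1} x_i), and t_i x_{i+1} = x_i t_i + z(1 + c_i c_{i+1}) x_{i+1}. -/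
/-- In the affine Hecke–Clifford superalgebra `AHC_r(z)` (encoded by an arbitrary
`k`-algebra with elements `t i` (1 ≤ i ≤ r-1), `c i`, `w i` (= ϖ_i, 1 ≤ i ≤ r)
satisfying the defining relations, with the parity automorphism `σ` recording that the
`c i` and `w i` are odd), the elements `x i := c i * w i` are even, pairwise commuting,
invertible with `x i⁻¹ = w i * c i`, and satisfy `c_i x_i = x_i⁻¹ c_i`,
`t_i x_i = x_{i+1} t_i - z (x_{i+1} - c_i c_{i+1} x_i)`, and
`t_i x_{i+1} = x_i t_i + z (1 + c_i c_{i+1}) x_{i+1}`. -/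
theorem stmt14 (k : Type*) [CommRing k] (hk : ringChar k ≠ 2)
    (A : Type*) [Ring A] [Algebra k A] (z : k) (r : ℕ)
    (t c w : ℕ → A) (σ : A →+* A)
    (ht : ∀ i, 1 ≤ i → i ≤ r - 1 → t i * t i = z • t i + 1)
    (hc2 : ∀ i, 1 ≤ i → i ≤ r → c i * c i = -1)
    (hcc : ∀ i j, 1 ≤ i → i ≤ r → 1 ≤ j → j ≤ r → i ≠ j → c i * c j = -(c j * c i))
    (hw2 : ∀ i, 1 ≤ i → i ≤ r → w i * w i = -1)
    (hww : ∀ i j, 1 ≤ i → i ≤ r → 1 ≤ j → j ≤ r → i ≠ j → w i * w j = -(w j * w i))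
    (htc : ∀ i, 1 ≤ i → i ≤ r - 1 → t i * c i = c (i + 1) * t i)
    (htcf : ∀ i j, 1 ≤ i → i ≤ r - 1 → 1 ≤ j → j ≤ r → j ≠ i → j ≠ i + 1 →
      t i * c j = c j * t i)
    (htw : ∀ i, 1 ≤ i → i ≤ r - 1 → t i * w (i + 1) = w i * t i)
    (htwf : ∀ i j, 1 ≤ i → i ≤ r - 1 → 1 ≤ j → j ≤ r → j ≠ i → j ≠ i + 1 →
      t i * w j = w j * t i)
    (hcw : ∀ i j, 1 ≤ i → i ≤ r → 1 ≤ j → j ≤ r → i ≠ j → c i * w j = -(w j * c i))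
    (hσc : ∀ i, 1 ≤ i → i ≤ r → σ (c i) = -(c i))
    (hσw : ∀ i, 1 ≤ i → i ≤ r → σ (w i) = -(w i)) :
    -- `x i = c i * w i` is even
    (∀ i, 1 ≤ i → i ≤ r → σ (c i * w i) = c i * w i) ∧
    -- invertible with inverse `w i * c i`
    (∀ i, 1 ≤ i → i ≤ r →
      (c i * w i) * (w i * c i) = 1 ∧ (w i * c i) * (c i * w i) = 1) ∧
    -- pairwise commuting
    (∀ i j, 1 ≤ i → i ≤ r → 1 ≤ j → j ≤ r → i ≠ j →
      (c i * w i) * (c j * w j) = (c j * w j) * (c i * w i)) ∧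
    -- `c_i x_i = x_i⁻¹ c_i`
    (∀ i, 1 ≤ i → i ≤ r → c i * (c i * w i) = (w i * c i) * c i) ∧
    -- `t_i x_i = x_{i+1} t_i - z (x_{i+1} - c_i c_{i+1} x_i)`
    (∀ i, 1 ≤ i → i ≤ r - 1 →
      t i * (c i * w i) =
        (c (i + 1) * w (i + 1)) * t i -
          z • ((c (i + 1) * w (i + 1)) - c i * c (i + 1) * (c i * w i))) ∧
    -- `t_i x_{i+1} = x_i t_i + z (1 + c_i c_{i+1}) x_{i+1}`
    (∀ i, 1 ≤ i → i ≤ r - 1 →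
      t i * (c (i + 1) * w (i + 1)) =
        (c i * w i) * t i +
          z • ((1 + c i * c (i + 1)) * (c (i + 1) * w (i + 1)))) := by
  refine ⟨?_, ?_, ?_, ?_, ?_, ?_⟩
  · intro i h1 h2
    rw [map_mul, hσc i h1 h2, hσw i h1 h2, neg_mul_neg]
  · intro i h1 h2
    constructor
    · calc c i * w i * (w i * c i) = c i * (w i * w i) * c i := by noncomm_ring
        _ = 1 := by rw [hw2 i h1 h2, mul_neg_one, neg_mul, hc2 i h1 h2, neg_neg]
    · calc w i * c i * (c i * w i) = w i * (c i * c i) * w i := by noncomm_ring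
        _ = 1 := by rw [hc2 i h1 h2, mul_neg_one, neg_mul, hw2 i h1 h2, neg_neg]
  · intro i j h1 h2 h3 h4 hne
    have hwc : w i * c j = -(c j * w i) := by
      rw [hcw j i h3 h4 h1 h2 (Ne.symm hne), neg_neg]
    have hwc' : c i * w j = -(w j * c i) := hcw i j h1 h2 h3 h4 hne
    have hcc' := hcc i j h1 h2 h3 h4 hne
    have hww' := hww i j h1 h2 h3 h4 hne
    calc c i * w i * (c j * w j)
        = c i * (w i * c j) * w j := by noncomm_ring
      _ = c i * -(c j * w i) * w j := by rw [hwc]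
      _ = -(c i * c j) * (w i * w j) := by noncomm_ring
      _ = -(-(c j * c i)) * (w i * w j) := by rw [hcc']
      _ = (c j * c i) * (w i * w j) := by rw [neg_neg]
      _ = (c j * c i) * -(w j * w i) := by rw [hww']
      _ = c j * -(c i * w j) * w i := by noncomm_ring
      _ = c j * -(-(w j * c i)) * w i := by rw [hwc']
      _ = c j * w j * (c i * w i) := by rw [neg_neg]; noncomm_ring
  · intro i h1 h2
    rw [← mul_assoc, hc2 i h1 h2, mul_assoc, hc2 i h1 h2, neg_one_mul, mul_neg_one]
  · intro i h1 h2
    have hir : i ≤ r := by omega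
    have hir1 : i + 1 ≤ r := by omega
    have hir1' : 1 ≤ i + 1 := by omega
    have htu : t i * (t i - z • 1) = 1 := by
      rw [mul_sub, ht i h1 h2, mul_smul_comm, mul_one]; abel
    have hwi : w i = t i * w (i + 1) * (t i - z • 1) := by
      rw [htw i h1 h2, mul_assoc, htu, mul_one]
    have htwi : t i * w i = w (i + 1) * t i - z • w (i + 1) + z • w i := by
      calc t i * w i = (t i * t i) * (w (i + 1) * (t i - z • 1)) := by
            rw [hwi]; noncomm_ring
        _ = (z • t i + 1) * (w (i + 1) * (t i - z • 1)) := by rw [ht i h1 h2]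
        _ = z • (t i * w (i + 1) * (t i - z • 1)) + w (i + 1) * t i - z • w (i + 1) := by
            simp only [add_mul, one_mul, smul_mul_assoc, mul_sub, mul_smul_comm,
              mul_one, mul_assoc, smul_sub, smul_add, smul_smul]
            abel
        _ = z • w i + w (i + 1) * t i - z • w (i + 1) := by rw [← hwi]
        _ = w (i + 1) * t i - z • w (i + 1) + z • w i := by abel
    have hccw : c i * c (i + 1) * (c i * w i) = c (i + 1) * w i := by
      calc c i * c (i + 1) * (c i * w i)
          = -(c (i + 1) * c i) * (c i * w i) := by
            rw [hcc i (i + 1) h1 hir hir1' hir1 (by omega)]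
        _ = -(c (i + 1) * ((c i * c i) * w i)) := by noncomm_ring
        _ = c (i + 1) * w i := by rw [hc2 i h1 hir, neg_one_mul, mul_neg, neg_neg]
    rw [hccw]
    calc t i * (c i * w i) = (t i * c i) * w i := by rw [mul_assoc]
      _ = c (i + 1) * (t i * w i) := by rw [htc i h1 h2, mul_assoc]
      _ = c (i + 1) * (w (i + 1) * t i - z • w (i + 1) + z • w i) := by rw [htwi]
      _ = c (i + 1) * w (i + 1) * t i -
          z • (c (i + 1) * w (i + 1) - c (i + 1) * w i) := by
            simp only [mul_add, mul_sub, mul_smul_comm, smul_sub, mul_assoc]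
            abel
  · intro i h1 h2
    have hir : i ≤ r := by omega
    have hir1 : i + 1 ≤ r := by omega
    have hir1' : 1 ≤ i + 1 := by omega
    have htu : t i * (t i - z • 1) = 1 := by
      rw [mul_sub, ht i h1 h2, mul_smul_comm, mul_one]; abel
    have hci1 : c (i + 1) = t i * c i * (t i - z • 1) := by
      rw [htc i h1 h2, mul_assoc, htu, mul_one]
    have htci : t i * c (i + 1) = z • c (i + 1) + c i * t i - z • c i := by
      calc t i * c (i + 1) = (t i * t i) * (c i * (t i - z • 1)) := by
            rw [hci1]; noncomm_ring
        _ = (z • t i + 1) * (c i * (t i - z • 1)) := by rw [ht i h1 h2]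
        _ = z • (t i * c i * (t i - z • 1)) + c i * t i - z • c i := by
            simp only [add_mul, one_mul, smul_mul_assoc, mul_sub, mul_smul_comm,
              mul_one, mul_assoc, smul_sub, smul_add, smul_smul]
            abel
        _ = z • c (i + 1) + c i * t i - z • c i := by rw [← hci1]
    have hccw : c i * c (i + 1) * (c (i + 1) * w (i + 1)) = -(c i * w (i + 1)) := by
      calc c i * c (i + 1) * (c (i + 1) * w (i + 1))
          = c i * ((c (i + 1) * c (i + 1)) * w (i + 1)) := by noncomm_ring
        _ = -(c i * w (i + 1)) := by rw [hc2 (i + 1) hir1' hir1, neg_one_mul, mul_neg]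
    rw [add_mul, one_mul, hccw]
    calc t i * (c (i + 1) * w (i + 1)) = (t i * c (i + 1)) * w (i + 1) := by
          rw [mul_assoc]
      _ = (z • c (i + 1) + c i * t i - z • c i) * w (i + 1) := by rw [htci]
      _ = z • (c (i + 1) * w (i + 1)) + c i * (t i * w (i + 1)) -
          z • (c i * w (i + 1)) := by
            simp only [add_mul, sub_mul, smul_mul_assoc, mul_assoc]
      _ = z • (c (i + 1) * w (i + 1)) + c i * (w i * t i) -
          z • (c i * w (i + 1)) := by rw [htw i h1 h2]
      _ = c i * w i * t i +
          z • (c (i + 1) * w (i + 1) + -(c i * w (i + 1))) := by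
            simp only [mul_assoc, smul_add, smul_neg]
            abel
end

section
/- The ring homomorphism β from the ring of symmetric functions Sym to a commutative ring R is well defined when one specifies images E_r of e_r and H_r of h_r (r ≥ 1, with E_0 = H_0 = 1) satisfying Σ_{r=0}^{k} (-1)^r E_{k-r} H_r = 0 for all k > 0. Concretely: if elements b_{2k} ∈ R (k ≥ 1) satisfy b_{2k}' - b_{2k} = z Σ_{r=1}^{k-1} b_{2r}' b_{2k-2r} for sequences b (left bubbles) and b' (right bubbles), then setting E_r = (-1)^{r-1} z b_{2r} and H_r = z b'_{2r} satisfies the defining relations of Sym. -/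
/-- The image of the elementary symmetric function `e_r`: `E_0 = 1`,
`E_r = (-1)^{r-1} z b_{2r}` for `r ≥ 1` (here `b r` denotes the left bubble `b_{2r}`). -/
def Ee {R : Type*} [CommRing R] (z : R) (b : ℕ → R) (r : ℕ) : R :=
  if r = 0 then 1 else (-1) ^ (r - 1) * z * b r

/-- The image of the complete homogeneous symmetric function `h_r`: `H_0 = 1`,
`H_r = z b'_{2r}` for `r ≥ 1` (here `b' r` denotes the right bubble `b'_{2r}`). -/
def Hh {R : Type*} [CommRing R] (z : R) (b' : ℕ → R) (r : ℕ) : R :=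
  if r = 0 then 1 else z * b' r

/-- If the bubbles satisfy `b'_{2k} - b_{2k} = z ∑_{r=1}^{k-1} b'_{2r} b_{2k-2r}` for all
`k > 0`, then the assignment `e_r ↦ (-1)^{r-1} z b_{2r}`, `h_r ↦ z b'_{2r}` satisfies the
defining relations `∑_{r=0}^{k} (-1)^r e_{k-r} h_r = 0` (k > 0) of the ring of symmetric
functions, so it yields a well-defined ring homomorphism `β : Sym → R`. -/
theorem stmt16 (R : Type*) [CommRing R] (z : R) (b b' : ℕ → R)
    (hbub : ∀ m : ℕ, 0 < m →
      b' m - b m = z * ∑ r ∈ Finset.Ico 1 m, b' r * b (m - r)) :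
    ∀ m : ℕ, 0 < m →
      ∑ r ∈ Finset.range (m + 1), (-1 : R) ^ r * Ee z b (m - r) * Hh z b' r = 0 := by
  intro m hm
  obtain ⟨n, rfl⟩ : ∃ n, m = n + 1 := ⟨m - 1, (Nat.succ_pred_eq_of_pos hm).symm⟩
  have hb := hbub (n + 1) (Nat.succ_pos n)
  rw [Finset.sum_Ico_eq_sum_range] at hb
  simp only [Nat.add_sub_cancel] at hb
  have heq : ∀ x : ℕ, n + 1 - (1 + x) = n - x := fun x => by omega
  simp only [heq] at hb
  rw [Finset.sum_range_succ, Finset.sum_range_succ']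
  have h0 : ((-1 : R) ^ 0 * Ee z b (n + 1 - 0) * Hh z b' 0)
      = (-1) ^ n * z * b (n + 1) := by
    simp [Ee, Hh]
  have hlast : ((-1 : R) ^ (n + 1) * Ee z b (n + 1 - (n + 1)) * Hh z b' (n + 1))
      = -((-1) ^ n * z * b' (n + 1)) := by
    simp [Ee, Hh, pow_succ]
    ring
  have hmid : ∀ i ∈ Finset.range n,
      ((-1 : R) ^ (i + 1) * Ee z b (n + 1 - (i + 1)) * Hh z b' (i + 1))
      = (-1) ^ n * z * (z * (b' (1 + i) * b (n - i))) := by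
    intro i hi
    rw [Finset.mem_range] at hi
    have h1 : n + 1 - (i + 1) = n - i := by omega
    have h2 : n - i ≠ 0 := by omega
    have h3 : 1 + i = i + 1 := by omega
    rw [h1, h3]
    simp only [Ee, Hh, if_neg h2, if_neg (Nat.succ_ne_zero i)]
    have h4 : n - i - 1 + (i + 1) = n := by omega
    calc (-1 : R) ^ (i + 1) * ((-1) ^ (n - i - 1) * z * b (n - i)) * (z * b' (i + 1))
        = (-1 : R) ^ (n - i - 1 + (i + 1)) * z * (z * (b' (i + 1) * b (n - i))) := by ring
      _ = (-1 : R) ^ n * z * (z * (b' (i + 1) * b (n - i))) := by rw [h4]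
  rw [Finset.sum_congr rfl hmid, h0, hlast, ← Finset.mul_sum, ← Finset.mul_sum]
  rw [← hb]
  ring
end
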